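/- arXiv:2301.03676 — 4 statements merged into one kernel-verified Lean document; each statement's English description precedes it below -/
import Mathlib

section
/- The abelianization of π₁(Σ₁) is the trivial group (i.e., Σ₁ is a homology 3-sphere). -/
open Matrix

noncomputable section

/-- `SU(2)`: 2×2 special unitary complex matrices. -/
abbrev SU2 : Type := Matrix.specialUnitaryGroup (Fin 2) ℂ

namespace CS

noncomputable instance : Group SU2 :=
  { (inferInstance : Monoid SU2) with
    inv := fun A => ⟨star (A : Matrix (Fin 2) (Fin 2) ℂ), by
      rcases Submonoid.mem_inf.mp A.2 with ⟨h1, h2⟩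
      refine Submonoid.mem_inf.mpr ⟨Unitary.star_mem h1, ?_⟩
      have hdet : (star (A : Matrix (Fin 2) (Fin 2) ℂ)).det = star ((A : Matrix (Fin 2) (Fin 2) ℂ).det) := by
        simp [Matrix.star_eq_conjTranspose, Matrix.det_conjTranspose]
      have h2' : (A : Matrix (Fin 2) (Fin 2) ℂ).det = 1 := h2
      have : (star (A : Matrix (Fin 2) (Fin 2) ℂ)).det = 1 := by rw [hdet, h2', star_one]
      simpa only [MonoidHom.mem_mker, ← Matrix.coe_detMonoidHom] using this⟩
    inv_mul_cancel := fun A => Subtype.ext (Submonoid.mem_inf.mp A.2).1.1 }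

/-- The topology of pointwise convergence on the space of representations. -/
instance repTop (G : Type*) [Group G] : TopologicalSpace (G →* SU2) :=
  TopologicalSpace.induced (fun ρ => (ρ : G → SU2)) inferInstance

/-- Conjugation equivalence of representations. -/
def conjSetoid (G : Type*) [Group G] : Setoid (G →* SU2) where
  r ρ σ := ∃ u : SU2, ∀ g, σ g = u * ρ g * u⁻¹
  iseqv := by
    refine ⟨fun ρ => ⟨1, by simp⟩, ?_, ?_⟩
    · rintro ρ σ ⟨u, h⟩
      exact ⟨u⁻¹, fun g => by rw [h g]; group⟩
    · rintro ρ σ τ ⟨u, h⟩ ⟨v, h'⟩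
      exact ⟨v * u, fun g => by rw [h' g, h g]; group⟩

/-- The `SU(2)` character variety of a group `G`. -/
abbrev CharVar (G : Type*) [Group G] : Type _ := Quotient (conjSetoid G)

/-- The conjugacy class of a representation. -/
abbrev charCl {G : Type*} [Group G] (ρ : G →* SU2) : CharVar G :=
  Quotient.mk (conjSetoid G) ρ

/-- A representation is abelian if its image is abelian. -/
def IsAbelianRep {G : Type*} [Group G] (ρ : G →* SU2) : Prop :=
  ∀ g h : G, Commute (ρ g) (ρ h)

/-- A representation is irreducible if its image is a non-abelian subgroup of `SU(2)`. -/
def IsIrrep {G : Type*} [Group G] (ρ : G →* SU2) : Prop :=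
  ¬ IsAbelianRep ρ

/-- The irreducible part `χ*(G)` of the character variety. -/
abbrev CharVarIrr (G : Type*) [Group G] : Type _ :=
  {c : CharVar G // ∃ ρ : G →* SU2, IsIrrep ρ ∧ c = charCl ρ}

end CS
namespace CS

/-- `su(2)`: trace-zero skew-adjoint 2×2 complex matrices, as a real vector space. -/
def su2 : Submodule ℝ (Matrix (Fin 2) (Fin 2) ℂ) where
  carrier := {A | Aᴴ = -A ∧ A.trace = 0}
  add_mem' := by
    rintro A B ⟨hA1, hA2⟩ ⟨hB1, hB2⟩
    refine ⟨?_, ?_⟩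
    · rw [Matrix.conjTranspose_add, hA1, hB1, neg_add]
    · rw [Matrix.trace_add, hA2, hB2, add_zero]
  zero_mem' := by
    constructor <;> simp
  smul_mem' := by
    rintro c A ⟨hA1, hA2⟩
    refine ⟨?_, ?_⟩
    · rw [Matrix.conjTranspose_smul, hA1, smul_neg, star_trivial]
    · rw [Matrix.trace_smul, hA2, smul_zero]

variable {G : Type*} [Group G]

/-- The adjoint action of a representation on 2×2 matrices: `g · v = ρ(g) v ρ(g)⁻¹`. -/
def adAct (ρ : G →* SU2) (g : G) (A : Matrix (Fin 2) (Fin 2) ℂ) : Matrix (Fin 2) (Fin 2) ℂ :=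
  (ρ g : Matrix (Fin 2) (Fin 2) ℂ) * A * ((ρ g⁻¹ : SU2) : Matrix (Fin 2) (Fin 2) ℂ)

lemma adAct_add (ρ : G →* SU2) (g : G) (A B : Matrix (Fin 2) (Fin 2) ℂ) :
    adAct ρ g (A + B) = adAct ρ g A + adAct ρ g B := by
  simp [adAct, Matrix.add_mul, Matrix.mul_add]

lemma adAct_smul (ρ : G →* SU2) (g : G) (c : ℝ) (A : Matrix (Fin 2) (Fin 2) ℂ) :
    adAct ρ g (c • A) = c • adAct ρ g A := by
  simp [adAct, Matrix.smul_mul, Matrix.mul_smul]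

/-- The space of 1-cocycles of `G` with coefficients in `su(2)` twisted by `ad ρ`. -/
def oneCocyclesAd (ρ : G →* SU2) : Submodule ℝ (G → Matrix (Fin 2) (Fin 2) ℂ) where
  carrier := {f | (∀ g, f g ∈ su2) ∧ ∀ g h, f (g * h) = f g + adAct ρ g (f h)}
  add_mem' := by
    rintro f f' ⟨hf1, hf2⟩ ⟨hf'1, hf'2⟩
    refine ⟨fun g => su2.add_mem (hf1 g) (hf'1 g), fun g h => ?_⟩
    simp only [Pi.add_apply, hf2 g h, hf'2 g h, adAct_add]
    abel
  zero_mem' := by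
    refine ⟨fun g => su2.zero_mem, fun g h => ?_⟩
    simp [adAct]
  smul_mem' := by
    rintro c f ⟨hf1, hf2⟩
    refine ⟨fun g => su2.smul_mem c (hf1 g), fun g h => ?_⟩
    simp only [Pi.smul_apply, hf2 g h, adAct_smul, smul_add]

/-- The space of 1-coboundaries of `G` with coefficients in `su(2)` twisted by `ad ρ`. -/
def oneCoboundariesAd (ρ : G →* SU2) : Submodule ℝ (G → Matrix (Fin 2) (Fin 2) ℂ) where
  carrier := {f | ∃ A ∈ su2, ∀ g, f g = adAct ρ g A - A}
  add_mem' := by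
    rintro f f' ⟨A, hA, hf⟩ ⟨B, hB, hf'⟩
    refine ⟨A + B, su2.add_mem hA hB, fun g => ?_⟩
    simp only [Pi.add_apply, hf g, hf' g, adAct_add]
    abel
  zero_mem' := ⟨0, su2.zero_mem, fun g => by simp [adAct]⟩
  smul_mem' := by
    rintro c f ⟨A, hA, hf⟩
    refine ⟨c • A, su2.smul_mem c hA, fun g => ?_⟩
    simp only [Pi.smul_apply, hf g, adAct_smul, smul_sub]

/-- First group cohomology `H¹(G; su(2)_{ad ρ})`, as a real vector space. -/
def H1Ad (ρ : G →* SU2) : Type _ :=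
  ↥(oneCocyclesAd ρ) ⧸ ((oneCoboundariesAd ρ).comap (oneCocyclesAd ρ).subtype)

noncomputable instance (ρ : G →* SU2) : AddCommGroup (H1Ad ρ) :=
  inferInstanceAs (AddCommGroup (↥(oneCocyclesAd ρ) ⧸ ((oneCoboundariesAd ρ).comap (oneCocyclesAd ρ).subtype)))

noncomputable instance (ρ : G →* SU2) : Module ℝ (H1Ad ρ) :=
  inferInstanceAs (Module ℝ (↥(oneCocyclesAd ρ) ⧸ ((oneCoboundariesAd ρ).comap (oneCocyclesAd ρ).subtype)))

/-- The dimension (rank) of `H¹(G; su(2)_{ad ρ})` over `ℝ`. -/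
noncomputable def h1dim (ρ : G →* SU2) : Cardinal := Module.rank ℝ (H1Ad ρ)

end CS
namespace CS

/-- The relator set of the torus knot group `⟨x, y | xᵖ = y^q⟩`. -/
def tkRel (p q : ℤ) : Set (FreeGroup (Fin 2)) :=
  {FreeGroup.of 0 ^ p * FreeGroup.of 1 ^ (-q)}

/-- The `(p,q)` torus knot group `G_{p,q} = ⟨x, y | xᵖ y^{-q}⟩`. -/
abbrev TK (p q : ℤ) : Type := PresentedGroup (tkRel p q)

/-- The generator `x` of `G_{p,q}`. -/
def tkx (p q : ℤ) : TK p q := PresentedGroup.of 0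

/-- The generator `y` of `G_{p,q}`. -/
def tky (p q : ℤ) : TK p q := PresentedGroup.of 1

/-- The meridian `μ = xᵃ yᵇ` of `G_{p,q}`. -/
def tkMu (p q a b : ℤ) : TK p q := tkx p q ^ a * tky p q ^ b

/-- The longitude `λ = xᵖ μ^{-pq}` of `G_{p,q}`. -/
def tkLam (p q a b : ℤ) : TK p q := tkx p q ^ p * tkMu p q a b ^ (-(p * q))

lemma tk_rel_holds (p q : ℤ) : tkx p q ^ p = tky p q ^ q := by
  have hmem : FreeGroup.of (0 : Fin 2) ^ p * FreeGroup.of (1 : Fin 2) ^ (-q) ∈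
      Subgroup.normalClosure (tkRel p q) :=
    Subgroup.subset_normalClosure rfl
  have h1 : PresentedGroup.mk (tkRel p q) (FreeGroup.of 0 ^ p * FreeGroup.of 1 ^ (-q)) = 1 :=
    (QuotientGroup.eq_one_iff _).mpr hmem
  have h2 : tkx p q ^ p * tky p q ^ (-q) = 1 := by
    have := h1
    rw [_root_.map_mul, map_zpow, map_zpow] at this
    exact this
  rw [_root_.zpow_neg] at h2
  exact (mul_inv_eq_one.mp h2)

lemma tk_xp_central (p q : ℤ) (w : TK p q) : Commute (tkx p q ^ p) w := by
  have hw : w ∈ Subgroup.closure (Set.range (PresentedGroup.of : Fin 2 → TK p q)) := by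
    rw [PresentedGroup.closure_range_of]; trivial
  induction hw using Subgroup.closure_induction with
  | mem z hz =>
      obtain ⟨i, rfl⟩ := hz
      fin_cases i
      · exact (Commute.refl (tkx p q)).zpow_left p
      · rw [tk_rel_holds p q]
        exact (Commute.refl (tky p q)).zpow_left q
  | one => exact Commute.one_right _
  | mul a b _ _ ha hb => exact ha.mul_right hb
  | inv a _ ha => exact ha.inv_right

lemma tk_mu_lam_comm (p q a b : ℤ) : Commute (tkMu p q a b) (tkLam p q a b) := by
  unfold tkLam
  exact (tk_xp_central p q (tkMu p q a b)).symm.mul_right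
    ((Commute.refl (tkMu p q a b)).zpow_right (-(p * q)))

end CS
namespace CS

/-- The free abelian group of rank 2, written multiplicatively. -/
abbrev Z2 : Type := Multiplicative (ℤ × ℤ)

/-- The homomorphism `ℤ² → G` sending the generators to a pair of commuting elements. -/
def zsqHom {G : Type*} [Group G] (u v : G) (huv : Commute u v) : Z2 →* G where
  toFun z := u ^ (Multiplicative.toAdd z).1 * v ^ (Multiplicative.toAdd z).2
  map_one' := by simp
  map_mul' z w := by
    have h := (huv.zpow_zpow (Multiplicative.toAdd w).1 (Multiplicative.toAdd z).2).eq
    simp only [toAdd_mul, Prod.fst_add, Prod.snd_add, _root_.zpow_add]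
    calc u ^ (Multiplicative.toAdd z).1 * u ^ (Multiplicative.toAdd w).1 *
          (v ^ (Multiplicative.toAdd z).2 * v ^ (Multiplicative.toAdd w).2)
        = u ^ (Multiplicative.toAdd z).1 *
            (u ^ (Multiplicative.toAdd w).1 * v ^ (Multiplicative.toAdd z).2) *
            v ^ (Multiplicative.toAdd w).2 := by group
      _ = u ^ (Multiplicative.toAdd z).1 *
            (v ^ (Multiplicative.toAdd z).2 * u ^ (Multiplicative.toAdd w).1) *
            v ^ (Multiplicative.toAdd w).2 := by rw [h]
      _ = u ^ (Multiplicative.toAdd z).1 * v ^ (Multiplicative.toAdd z).2 *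
            (u ^ (Multiplicative.toAdd w).1 * v ^ (Multiplicative.toAdd w).2) := by group

section Amalg

variable {A G H : Type*} [Group A] [Group G] [Group H]

/-- The normal subgroup of the free product generated by the amalgamation relations. -/
def amalgRel (φ : A →* G) (ψ : A →* H) : Subgroup (Monoid.Coprod G H) :=
  Subgroup.normalClosure (Set.range fun a => Monoid.Coprod.inl (φ a) * (Monoid.Coprod.inr (ψ a))⁻¹)

instance amalgRel_normal (φ : A →* G) (ψ : A →* H) : (amalgRel φ ψ).Normal :=
  Subgroup.normalClosure_normal

/-- The pushout (amalgamated free product) of `φ : A → G` and `ψ : A → H`. -/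
abbrev Amalg (φ : A →* G) (ψ : A →* H) : Type _ :=
  Monoid.Coprod G H ⧸ amalgRel φ ψ

/-- The canonical map `G → G *_A H`. -/
def Amalg.inl (φ : A →* G) (ψ : A →* H) : G →* Amalg φ ψ :=
  (QuotientGroup.mk' (amalgRel φ ψ)).comp Monoid.Coprod.inl

/-- The canonical map `H → G *_A H`. -/
def Amalg.inr (φ : A →* G) (ψ : A →* H) : H →* Amalg φ ψ :=
  (QuotientGroup.mk' (amalgRel φ ψ)).comp Monoid.Coprod.inr

lemma amalg_comm (φ : A →* G) (ψ : A →* H) (a : A) :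
    Amalg.inl φ ψ (φ a) = Amalg.inr φ ψ (ψ a) := by
  have hgen : Monoid.Coprod.inl (φ a) * (Monoid.Coprod.inr (ψ a))⁻¹ ∈ amalgRel φ ψ :=
    Subgroup.subset_normalClosure ⟨a, rfl⟩
  have hinv : (Monoid.Coprod.inr (ψ a) : Monoid.Coprod G H) * (Monoid.Coprod.inl (φ a))⁻¹ ∈
      amalgRel φ ψ := by
    have := (amalgRel φ ψ).inv_mem hgen
    simpa [_root_.mul_inv_rev] using this
  have hkey : ((Monoid.Coprod.inl (φ a) : Monoid.Coprod G H))⁻¹ * Monoid.Coprod.inr (ψ a) ∈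
      amalgRel φ ψ := (amalgRel_normal φ ψ).mem_comm hinv
  exact (QuotientGroup.eq (s := amalgRel φ ψ)).mpr hkey

end Amalg

/-! Specific meridians and longitudes. -/

/-- Meridian of `T(3,5)`. -/
def mu35 : TK 3 5 := tkMu 3 5 2 (-3)
/-- Longitude of `T(3,5)`. -/
def lam35 : TK 3 5 := tkLam 3 5 2 (-3)
/-- Meridian of `T(2,7)`. -/
def mu27 : TK 2 7 := tkMu 2 7 1 (-3)
/-- Longitude of `T(2,7)`. -/
def lam27 : TK 2 7 := tkLam 2 7 1 (-3)
/-- Meridian of `T(-2,7)`. -/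
def muN27 : TK (-2) 7 := tkMu (-2) 7 1 3
/-- Longitude of `T(-2,7)`. -/
def lamN27 : TK (-2) 7 := tkLam (-2) 7 1 3

/-- `φ_X : ℤ² → G_{3,5}`, `(m,n) ↦ μ_X^m λ_X^n`. -/
def phiX : Z2 →* TK 3 5 := zsqHom mu35 lam35 (tk_mu_lam_comm 3 5 2 (-3))

lemma mu_mulLam_comm {Γ : Type*} [Group Γ] {μ ℓ : Γ} (h : Commute μ ℓ) :
    Commute μ ((μ * ℓ)⁻¹) :=
  ((Commute.refl μ).mul_right h).inv_right

/-- `φ_Y : ℤ² → G_{2,7}`, `(m,n) ↦ μ_Y^m (μ_Y λ_Y)^{-n}`. -/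
def phiY : Z2 →* TK 2 7 :=
  zsqHom mu27 ((mu27 * lam27)⁻¹) (mu_mulLam_comm (tk_mu_lam_comm 2 7 1 (-3)))

/-- `π₁(Σ₁)`, the pushout of `φ_X` and `φ_Y`. -/
abbrev Pi1Sigma1 : Type _ := Amalg phiX phiY

/-- `π₁(Z)`, the group of the complement of `T(-2,7) # T(-2,7)`:
the pushout of the two meridian inclusions `ℤ → G_{-2,7}`. -/
abbrev Pi1Z : Type _ :=
  Amalg (zpowersHom (TK (-2) 7) muN27) (zpowersHom (TK (-2) 7) muN27)

/-- The meridian of `Z`. -/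
def muZ : Pi1Z := Amalg.inl _ _ muN27

/-- The longitude of `Z`: the product of the images of the two longitudes. -/
def lamZ : Pi1Z := Amalg.inl _ _ lamN27 * Amalg.inr _ _ lamN27

lemma muZ_eq_inr : muZ = Amalg.inr (zpowersHom (TK (-2) 7) muN27) (zpowersHom (TK (-2) 7) muN27) muN27 := by
  have := amalg_comm (zpowersHom (TK (-2) 7) muN27) (zpowersHom (TK (-2) 7) muN27)
    (Multiplicative.ofAdd 1)
  simpa [muZ] using this

lemma muZ_lamZ_comm : Commute muZ lamZ := by
  have h1 : Commute muZ (Amalg.inl (zpowersHom (TK (-2) 7) muN27) (zpowersHom (TK (-2) 7) muN27) lamN27) :=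
    (tk_mu_lam_comm (-2) 7 1 3).map _
  have h2 : Commute muZ (Amalg.inr (zpowersHom (TK (-2) 7) muN27) (zpowersHom (TK (-2) 7) muN27) lamN27) := by
    rw [muZ_eq_inr]
    exact (tk_mu_lam_comm (-2) 7 1 3).map _
  exact h1.mul_right h2

/-- `ψ_X : ℤ² → G_{3,5}` (same formula as `φ_X`). -/
def psiX : Z2 →* TK 3 5 := phiX

/-- `ψ_Z : ℤ² → π₁(Z)`, `(m,n) ↦ μ_Z^m (μ_Z λ_Z)^{-n}`. -/
def psiZ : Z2 →* Pi1Z := zsqHom muZ ((muZ * lamZ)⁻¹) (mu_mulLam_comm muZ_lamZ_comm)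

/-- `π₁(Σ₂)`, the pushout of `ψ_X` and `ψ_Z`. -/
abbrev Pi1Sigma2 : Type _ := Amalg psiX psiZ

end CS
namespace CS

/-- The diagonal matrix `diag(e^{it}, e^{-it})`. -/
def diagU (t : ℝ) : Matrix (Fin 2) (Fin 2) ℂ :=
  Matrix.diagonal ![Complex.exp ((t : ℂ) * Complex.I), Complex.exp (-(t : ℂ) * Complex.I)]

lemma star_exp_I (s : ℝ) :
    star (Complex.exp ((s : ℂ) * Complex.I)) = Complex.exp (-(s : ℂ) * Complex.I) :=
  calc star (Complex.exp ((s : ℂ) * Complex.I))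
      = (starRingEnd ℂ) (Complex.exp ((s : ℂ) * Complex.I)) := rfl
    _ = Complex.exp ((starRingEnd ℂ) ((s : ℂ) * Complex.I)) := (Complex.exp_conj _).symm
    _ = Complex.exp (-(s : ℂ) * Complex.I) := by
        rw [_root_.map_mul, Complex.conj_I, Complex.conj_ofReal, mul_neg, ← neg_mul]

lemma exp_I_mul_exp_neg_I (s : ℝ) :
    Complex.exp ((s : ℂ) * Complex.I) * Complex.exp (-(s : ℂ) * Complex.I) = 1 := by
  rw [← Complex.exp_add, show (s : ℂ) * Complex.I + -(s : ℂ) * Complex.I = 0 by ring,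
    Complex.exp_zero]

lemma diagU_mul (s u : ℝ) : diagU s * diagU u = diagU (s + u) := by
  unfold diagU
  rw [Matrix.diagonal_mul_diagonal, Matrix.diagonal_eq_diagonal_iff]
  intro i
  fin_cases i
  · show Complex.exp _ * Complex.exp _ = Complex.exp _
    rw [← Complex.exp_add]; congr 1; push_cast; ring
  · show Complex.exp _ * Complex.exp _ = Complex.exp _
    rw [← Complex.exp_add]; congr 1; push_cast; ring

lemma diagU_zero : diagU 0 = 1 := by
  unfold diagU
  rw [show (![Complex.exp (((0:ℝ) : ℂ) * Complex.I), Complex.exp (-((0:ℝ) : ℂ) * Complex.I)] :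
      Fin 2 → ℂ) = fun _ => 1 by funext i; fin_cases i <;> simp]
  exact Matrix.diagonal_one

lemma star_diagU (t : ℝ) : star (diagU t) = diagU (-t) := by
  unfold diagU
  rw [Matrix.star_eq_conjTranspose, Matrix.diagonal_conjTranspose,
    Matrix.diagonal_eq_diagonal_iff]
  intro i
  fin_cases i
  · show star (Complex.exp ((t : ℂ) * Complex.I)) = Complex.exp (((-t : ℝ) : ℂ) * Complex.I)
    rw [star_exp_I t]; push_cast; ring_nf
  · show star (Complex.exp (-(t : ℂ) * Complex.I)) = Complex.exp (-((-t : ℝ) : ℂ) * Complex.I)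
    rw [show -(t : ℂ) * Complex.I = ((-t : ℝ) : ℂ) * Complex.I by push_cast; ring,
      star_exp_I (-t)]

lemma diagU_mem (t : ℝ) : diagU t ∈ Matrix.specialUnitaryGroup (Fin 2) ℂ := by
  refine Submonoid.mem_inf.mpr ⟨⟨?_, ?_⟩, ?_⟩
  · rw [star_diagU, diagU_mul, neg_add_cancel, diagU_zero]
  · rw [star_diagU, diagU_mul, add_neg_cancel, diagU_zero]
  · have : (diagU t).det = 1 := by
      unfold diagU
      rw [Matrix.det_diagonal, Fin.prod_univ_two]
      simpa using exp_I_mul_exp_neg_I t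
    simpa only [MonoidHom.mem_mker, ← Matrix.coe_detMonoidHom] using this

/-- The element `diag(e^{it}, e^{-it})` of `SU(2)`. -/
def diagSU (t : ℝ) : SU2 := ⟨diagU t, diagU_mem t⟩

lemma diagSU_comm (s t : ℝ) : Commute (diagSU s) (diagSU t) := by
  apply Subtype.ext
  show diagU s * diagU t = diagU t * diagU s
  rw [diagU_mul, diagU_mul, add_comm]

end CS
namespace CS

/-- The setoid on `A × [0,1)` collapsing `A × {0}` to a point. -/
def coneSetoid (A : Type*) : Setoid (A × (Set.Ico (0:ℝ) 1)) where
  r p q := p = q ∨ (((p.2 : ℝ) = 0) ∧ ((q.2 : ℝ) = 0))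
  iseqv := by
    constructor
    · intro p; exact Or.inl rfl
    · rintro p q (rfl | ⟨h1, h2⟩)
      · exact Or.inl rfl
      · exact Or.inr ⟨h2, h1⟩
    · rintro p q r (rfl | ⟨h1, h2⟩) h'
      · exact h'
      · rcases h' with rfl | ⟨h3, h4⟩
        · exact Or.inr ⟨h1, h2⟩
        · exact Or.inr ⟨h1, h4⟩

/-- The open cone on a space `A`: `(A × [0,1)) / (A × {0})`. -/
abbrev OpenCone (A : Type*) [TopologicalSpace A] : Type _ := Quotient (coneSetoid A)

/-- The setoid on `X ⊕ Y` identifying the two base points `x₀` and `y₀`. -/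
def wedgeSetoid (X Y : Type*) (x0 : X) (y0 : Y) : Setoid (X ⊕ Y) where
  r p q := p = q ∨ ((p = Sum.inl x0 ∨ p = Sum.inr y0) ∧ (q = Sum.inl x0 ∨ q = Sum.inr y0))
  iseqv := by
    constructor
    · intro p; exact Or.inl rfl
    · rintro p q (rfl | ⟨h1, h2⟩)
      · exact Or.inl rfl
      · exact Or.inr ⟨h2, h1⟩
    · rintro p q r (rfl | ⟨h1, h2⟩) h'
      · exact h'
      · rcases h' with rfl | ⟨h3, h4⟩
        · exact Or.inr ⟨h1, h2⟩
        · exact Or.inr ⟨h1, h4⟩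

/-- The one-point union (wedge) of `X` and `Y` at the base points `x₀`, `y₀`. -/
abbrev Wedge (X Y : Type*) [TopologicalSpace X] [TopologicalSpace Y] (x0 : X) (y0 : Y) :
    Type _ := Quotient (wedgeSetoid X Y x0 y0)

/-- The 2-sphere. -/
abbrev Sphere2 : Type _ := Metric.sphere (0 : EuclideanSpace ℝ (Fin 3)) 1

/-- The 3-torus. -/
abbrev Torus3 : Type _ := Circle × Circle × Circle

end CS

lemma solve4_aux {M : Type*} [AddCommGroup M] (a b c d : M)
    (h1 : (3:ℤ)•a = (5:ℤ)•b) (h2 : (2:ℤ)•c = (7:ℤ)•d)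
    (h3 : (2:ℤ)•a + (-3:ℤ)•b = (1:ℤ)•c + (-3:ℤ)•d)
    (h4 : (-27:ℤ)•a + (45:ℤ)•b = (11:ℤ)•c + (-39:ℤ)•d) :
    a = 0 ∧ b = 0 ∧ c = 0 ∧ d = 0 := by
  have D1 : (3:ℤ)•a - (5:ℤ)•b = 0 := sub_eq_zero_of_eq h1
  have D2 : (2:ℤ)•c - (7:ℤ)•d = 0 := sub_eq_zero_of_eq h2
  have D3 : ((2:ℤ)•a + (-3:ℤ)•b) - ((1:ℤ)•c + (-3:ℤ)•d) = 0 := sub_eq_zero_of_eq h3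
  have D4 : ((-27:ℤ)•a + (45:ℤ)•b) - ((11:ℤ)•c + (-39:ℤ)•d) = 0 := sub_eq_zero_of_eq h4
  have ka : a = (42:ℤ)•((3:ℤ)•a - (5:ℤ)•b) + (30:ℤ)•((2:ℤ)•c - (7:ℤ)•d)
      + (5:ℤ)•(((2:ℤ)•a + (-3:ℤ)•b) - ((1:ℤ)•c + (-3:ℤ)•d))
      + (5:ℤ)•(((-27:ℤ)•a + (45:ℤ)•b) - ((11:ℤ)•c + (-39:ℤ)•d)) := by module
  have kb : b = (25:ℤ)•((3:ℤ)•a - (5:ℤ)•b) + (18:ℤ)•((2:ℤ)•c - (7:ℤ)•d)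
      + (3:ℤ)•(((2:ℤ)•a + (-3:ℤ)•b) - ((1:ℤ)•c + (-3:ℤ)•d))
      + (3:ℤ)•(((-27:ℤ)•a + (45:ℤ)•b) - ((11:ℤ)•c + (-39:ℤ)•d)) := by module
  have kc : c = (63:ℤ)•((3:ℤ)•a - (5:ℤ)•b) + (39:ℤ)•((2:ℤ)•c - (7:ℤ)•d)
      + (7:ℤ)•(((-27:ℤ)•a + (45:ℤ)•b) - ((11:ℤ)•c + (-39:ℤ)•d)) := by module
  have kd : d = (18:ℤ)•((3:ℤ)•a - (5:ℤ)•b) + (11:ℤ)•((2:ℤ)•c - (7:ℤ)•d)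
      + (2:ℤ)•(((-27:ℤ)•a + (45:ℤ)•b) - ((11:ℤ)•c + (-39:ℤ)•d)) := by module
  rw [D1, D2, D3, D4] at ka kb
  rw [D1, D2, D4] at kc kd
  simp at ka kb kc kd
  exact ⟨ka, kb, kc, kd⟩

open CS in
/-- `Σ₁` is a homology 3-sphere: the abelianization of `π₁(Σ₁)` is trivial. -/
theorem abelianization_Pi1Sigma1_trivial : Subsingleton (Abelianization Pi1Sigma1) := by
  classical
  let F : Pi1Sigma1 →* Abelianization Pi1Sigma1 := Abelianization.of
  let g1 : TK 3 5 →* Abelianization Pi1Sigma1 := F.comp (Amalg.inl phiX phiY)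
  let g2 : TK 2 7 →* Abelianization Pi1Sigma1 := F.comp (Amalg.inr phiX phiY)
  have eX1 : phiX (Multiplicative.ofAdd (1,0)) = mu35 := by simp [phiX, zsqHom]
  have eY1 : phiY (Multiplicative.ofAdd (1,0)) = mu27 := by simp [phiY, zsqHom]
  have eX2 : phiX (Multiplicative.ofAdd (0,1)) = lam35 := by simp [phiX, zsqHom]
  have eY2 : phiY (Multiplicative.ofAdd (0,1)) = (mu27 * lam27)⁻¹ := by simp [phiY, zsqHom]
  have R1 : g1 (tkx 3 5) ^ (3:ℤ) = g1 (tky 3 5) ^ (5:ℤ) := by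
    have := congrArg g1 (tk_rel_holds 3 5)
    rwa [map_zpow, map_zpow] at this
  have R2 : g2 (tkx 2 7) ^ (2:ℤ) = g2 (tky 2 7) ^ (7:ℤ) := by
    have := congrArg g2 (tk_rel_holds 2 7)
    rwa [map_zpow, map_zpow] at this
  have R3 : g1 (tkx 3 5) ^ (2:ℤ) * g1 (tky 3 5) ^ (-3:ℤ)
      = g2 (tkx 2 7) ^ (1:ℤ) * g2 (tky 2 7) ^ (-3:ℤ) := by
    have h := congrArg F (amalg_comm phiX phiY (Multiplicative.ofAdd (1,0)))
    rw [eX1, eY1] at h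
    simp only [mu35, mu27, tkMu, _root_.map_mul, map_zpow] at h; exact h
  have R4 : g1 (tkx 3 5) ^ (3:ℤ) * (g1 (tkx 3 5) ^ (2:ℤ) * g1 (tky 3 5) ^ (-3:ℤ)) ^ (-(3*5) : ℤ)
      = (g2 (tkx 2 7) ^ (1:ℤ) * g2 (tky 2 7) ^ (-3:ℤ)
          * (g2 (tkx 2 7) ^ (2:ℤ) * (g2 (tkx 2 7) ^ (1:ℤ) * g2 (tky 2 7) ^ (-3:ℤ)) ^ (-(2*7):ℤ)))⁻¹ := by
    have h := congrArg F (amalg_comm phiX phiY (Multiplicative.ofAdd (0,1)))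
    rw [eX2, eY2] at h
    simp only [mu35, mu27, lam35, lam27, tkMu, tkLam, _root_.map_mul, map_zpow, map_inv] at h; exact h
  -- pass to additive notation
  set a := Additive.ofMul (g1 (tkx 3 5)) with ha'
  set b := Additive.ofMul (g1 (tky 3 5)) with hb'
  set c := Additive.ofMul (g2 (tkx 2 7)) with hc'
  set d := Additive.ofMul (g2 (tky 2 7)) with hd'
  have A1 : (3:ℤ)•a = (5:ℤ)•b := by
    have h := congrArg Additive.ofMul R1
    simp only [ofMul_mul, ofMul_zpow, ofMul_inv] at h
    abel_nf at h ⊢; exact h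
  have A2 : (2:ℤ)•c = (7:ℤ)•d := by
    have h := congrArg Additive.ofMul R2
    simp only [ofMul_mul, ofMul_zpow, ofMul_inv] at h
    abel_nf at h ⊢; exact h
  have A3 : (2:ℤ)•a + (-3:ℤ)•b = (1:ℤ)•c + (-3:ℤ)•d := by
    have h := congrArg Additive.ofMul R3
    simp only [ofMul_mul, ofMul_zpow, ofMul_inv] at h
    abel_nf at h ⊢; exact h
  have A4 : (-27:ℤ)•a + (45:ℤ)•b = (11:ℤ)•c + (-39:ℤ)•d := by
    have h := congrArg Additive.ofMul R4
    simp only [ofMul_mul, ofMul_zpow, ofMul_inv] at h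
    abel_nf at h ⊢; exact h
  obtain ⟨za, zb, zc, zd⟩ := solve4_aux a b c d A1 A2 A3 A4
  have t1 : g1 (tkx 3 5) = 1 := by rwa [ha', ofMul_eq_zero] at za
  have t2 : g1 (tky 3 5) = 1 := by rwa [hb', ofMul_eq_zero] at zb
  have t3 : g2 (tkx 2 7) = 1 := by rwa [hc', ofMul_eq_zero] at zc
  have t4 : g2 (tky 2 7) = 1 := by rwa [hd', ofMul_eq_zero] at zd
  -- F kills everything
  have hF : F.comp (QuotientGroup.mk' (amalgRel phiX phiY)) = 1 := by
    apply Monoid.Coprod.hom_ext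
    · apply PresentedGroup.ext
      intro i
      fin_cases i
      · exact t1
      · exact t2
    · apply PresentedGroup.ext
      intro i
      fin_cases i
      · exact t3
      · exact t4
  have hall : ∀ g : Abelianization Pi1Sigma1, g = 1 := by
    intro g
    obtain ⟨w, hw⟩ := QuotientGroup.mk_surjective (s := commutator Pi1Sigma1) g
    rw [← hw]
    show F w = 1
    obtain ⟨v, rfl⟩ := QuotientGroup.mk'_surjective (amalgRel phiX phiY) w
    exact DFunLike.congr_fun hF v
  exact ⟨fun x y => (hall x).trans (hall y).symm⟩
end
end

section
/- The abelianization of π₁(Σ₂) is the trivial group (i.e., Σ₂ is a homology 3-sphere). -/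
open Matrix

noncomputable section

namespace CS

/-- A hom out of a torus knot group vanishing on the generators vanishes. -/
lemma tk_hom_trivial {p q : ℤ} {A : Type*} [Group A] (f : TK p q →* A)
    (hx : f (tkx p q) = 1) (hy : f (tky p q) = 1) (w : TK p q) : f w = 1 := by
  have hw : w ∈ Subgroup.closure (Set.range (PresentedGroup.of : Fin 2 → TK p q)) := by
    rw [PresentedGroup.closure_range_of]; trivial
  induction hw using Subgroup.closure_induction with
  | mem z hz => obtain ⟨i, rfl⟩ := hz; fin_cases i; exacts [hx, hy]
  | one => simp
  | mul a b _ _ ha hb => rw [_root_.map_mul, ha, hb, one_mul]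
  | inv a _ ha => rw [_root_.map_inv, ha, inv_one]

/-- A hom out of an amalgam vanishing on both factors vanishes. -/
lemma amalg_hom_trivial {A G H P : Type*} [Group A] [Group G] [Group H] [Group P]
    (φ : A →* G) (ψ : A →* H) (f : Amalg φ ψ →* P)
    (hL : ∀ g, f (Amalg.inl φ ψ g) = 1) (hR : ∀ h, f (Amalg.inr φ ψ h) = 1)
    (w : Amalg φ ψ) : f w = 1 := by
  obtain ⟨x, rfl⟩ := QuotientGroup.mk'_surjective (amalgRel φ ψ) w
  induction x using Monoid.Coprod.induction_on with
  | inl m => exact hL m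
  | inr n => exact hR n
  | mul x y hx hy =>
      have : (QuotientGroup.mk' (amalgRel φ ψ)) (x * y) =
          (QuotientGroup.mk' (amalgRel φ ψ)) x * (QuotientGroup.mk' (amalgRel φ ψ)) y :=
        _root_.map_mul _ _ _
      rw [this, _root_.map_mul, hx, hy, one_mul]

section CommCalc

variable {A : Type*} [CommGroup A]

lemma calcN27 (a b : A) (hrel : a ^ (-2 : ℤ) = b ^ (7 : ℤ)) :
    (a * b ^ (3 : ℤ)) ^ (7 : ℤ) = a ∧ (a * b ^ (3 : ℤ)) ^ (-2 : ℤ) = b ∧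
      a ^ (-2 : ℤ) * (a * b ^ (3 : ℤ)) ^ (14 : ℤ) = 1 := by
  have hb21 : (b ^ (3 : ℤ)) ^ (7 : ℤ) = a ^ (-6 : ℤ) := by
    rw [← _root_.zpow_mul, show (3 : ℤ) * 7 = 7 * 3 by norm_num, _root_.zpow_mul, ← hrel, ← _root_.zpow_mul]
    norm_num
  have hb6 : (b ^ (3 : ℤ)) ^ (-2 : ℤ) = a ^ (2 : ℤ) * b := by
    rw [← _root_.zpow_mul, show (3 : ℤ) * (-2) = 7 * (-1) + 1 by norm_num, _root_.zpow_add,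
      _root_.zpow_mul, ← hrel, ← _root_.zpow_mul, zpow_one]
    norm_num
  have hb42 : (b ^ (3 : ℤ)) ^ (14 : ℤ) = a ^ (-12 : ℤ) := by
    rw [← _root_.zpow_mul, show (3 : ℤ) * 14 = 7 * 6 by norm_num, _root_.zpow_mul, ← hrel, ← _root_.zpow_mul]
    norm_num
  refine ⟨?_, ?_, ?_⟩
  · rw [mul_zpow, hb21, ← _root_.zpow_add]; norm_num
  · rw [mul_zpow, hb6, ← mul_assoc, ← _root_.zpow_add]; norm_num
  · rw [mul_zpow, hb42, ← mul_assoc, ← _root_.zpow_add, ← _root_.zpow_add]; norm_num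

lemma calc35 (u v : A) (hrel : u ^ (3 : ℤ) = v ^ (5 : ℤ)) :
    (u ^ (2 : ℤ) * v ^ (-3 : ℤ)) ^ (5 : ℤ) = u ∧
      (u ^ (2 : ℤ) * v ^ (-3 : ℤ)) ^ (3 : ℤ) = v ∧
      u ^ (3 : ℤ) * (u ^ (2 : ℤ) * v ^ (-3 : ℤ)) ^ (-15 : ℤ) = 1 := by
  have hv15 : (v ^ (-3 : ℤ)) ^ (5 : ℤ) = u ^ (-9 : ℤ) := by
    rw [← _root_.zpow_mul, show (-3 : ℤ) * 5 = 5 * (-3) by norm_num, _root_.zpow_mul, ← hrel, ← _root_.zpow_mul]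
    norm_num
  have hv9 : (v ^ (-3 : ℤ)) ^ (3 : ℤ) = u ^ (-6 : ℤ) * v := by
    rw [← _root_.zpow_mul, show (-3 : ℤ) * 3 = 5 * (-2) + 1 by norm_num, _root_.zpow_add,
      _root_.zpow_mul, ← hrel, ← _root_.zpow_mul, zpow_one]
    norm_num
  have hv45 : (v ^ (-3 : ℤ)) ^ (-15 : ℤ) = u ^ (27 : ℤ) := by
    rw [← _root_.zpow_mul, show (-3 : ℤ) * (-15) = 5 * 9 by norm_num, _root_.zpow_mul, ← hrel, ← _root_.zpow_mul]
    norm_num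
  refine ⟨?_, ?_, ?_⟩
  · rw [mul_zpow, ← _root_.zpow_mul, hv15, ← _root_.zpow_add]; norm_num
  · rw [mul_zpow, ← _root_.zpow_mul, hv9, ← mul_assoc, ← _root_.zpow_add]; norm_num
  · rw [mul_zpow, ← _root_.zpow_mul, hv45, ← mul_assoc, ← _root_.zpow_add, ← _root_.zpow_add]; norm_num

end CommCalc

/-- Any hom from `π₁(Σ₂)` to a commutative group is trivial. -/
lemma pi1Sigma2_hom_trivial {A : Type*} [CommGroup A] (F : Pi1Sigma2 →* A)
    (g : Pi1Sigma2) : F g = 1 := by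
  set fX : TK 3 5 →* A := F.comp (Amalg.inl psiX psiZ) with hfX
  set fZ : Pi1Z →* A := F.comp (Amalg.inr psiX psiZ) with hfZ
  set f1 : TK (-2) 7 →* A := fZ.comp (Amalg.inl _ _) with hf1
  set f2 : TK (-2) 7 →* A := fZ.comp (Amalg.inr _ _) with hf2
  -- relations in the factors
  have hrelX : fX (tkx 3 5) ^ (3 : ℤ) = fX (tky 3 5) ^ (5 : ℤ) := by
    rw [← _root_.map_zpow, ← _root_.map_zpow, tk_rel_holds]
  have hrel1 : f1 (tkx (-2) 7) ^ (-2 : ℤ) = f1 (tky (-2) 7) ^ (7 : ℤ) := by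
    rw [← _root_.map_zpow, ← _root_.map_zpow, tk_rel_holds]
  have hrel2 : f2 (tkx (-2) 7) ^ (-2 : ℤ) = f2 (tky (-2) 7) ^ (7 : ℤ) := by
    rw [← _root_.map_zpow, ← _root_.map_zpow, tk_rel_holds]
  obtain ⟨hmu35_5, hmu35_3, hlam35⟩ := calc35 _ _ hrelX
  obtain ⟨hmu1_7, hmu1_m2, hlam1⟩ := calcN27 _ _ hrel1
  obtain ⟨hmu2_7, hmu2_m2, hlam2⟩ := calcN27 _ _ hrel2
  -- expressions of meridians/longitudes
  have hmuX : fX mu35 = fX (tkx 3 5) ^ (2 : ℤ) * fX (tky 3 5) ^ (-3 : ℤ) := by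
    simp [mu35, tkMu, _root_.map_mul, _root_.map_zpow]
  have hlamX : fX lam35 = fX (tkx 3 5) ^ (3 : ℤ) * fX mu35 ^ (-15 : ℤ) := by
    have h : lam35 = tkx 3 5 ^ (3 : ℤ) * mu35 ^ (-15 : ℤ) := by
      simp only [lam35, tkLam, mu35]
      norm_num
    rw [h, _root_.map_mul, _root_.map_zpow, _root_.map_zpow]
  have hmu1 : f1 muN27 = f1 (tkx (-2) 7) * f1 (tky (-2) 7) ^ (3 : ℤ) := by
    simp [muN27, tkMu, _root_.map_mul, _root_.map_zpow]
  have hlam1' : f1 lamN27 = f1 (tkx (-2) 7) ^ (-2 : ℤ) * f1 muN27 ^ (14 : ℤ) := by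
    simp [lamN27, tkLam, muN27, _root_.map_mul, _root_.map_zpow]
  have hmu2 : f2 muN27 = f2 (tkx (-2) 7) * f2 (tky (-2) 7) ^ (3 : ℤ) := by
    simp [muN27, tkMu, _root_.map_mul, _root_.map_zpow]
  have hlam2' : f2 lamN27 = f2 (tkx (-2) 7) ^ (-2 : ℤ) * f2 muN27 ^ (14 : ℤ) := by
    simp [lamN27, tkLam, muN27, _root_.map_mul, _root_.map_zpow]
  have hlamN1 : f1 lamN27 = 1 := by rw [hlam1', hmu1]; exact hlam1
  have hlamN2 : f2 lamN27 = 1 := by rw [hlam2', hmu2]; exact hlam2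
  -- fZ on muZ and lamZ
  have hfZmu : fZ muZ = f1 muN27 := rfl
  have hfZlam : fZ lamZ = 1 := by
    have : fZ lamZ = f1 lamN27 * f2 lamN27 := by
      simp [lamZ, _root_.map_mul, hf1, hf2]
    rw [this, hlamN1, hlamN2, one_mul]
  -- the amalgamation equations
  have hE : ∀ z : Z2, fX (psiX z) = fZ (psiZ z) := by
    intro z
    have := amalg_comm psiX psiZ z
    calc fX (psiX z) = F (Amalg.inl psiX psiZ (psiX z)) := rfl
      _ = F (Amalg.inr psiX psiZ (psiZ z)) := by rw [this]
      _ = fZ (psiZ z) := rfl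
  have hE01 : fX lam35 = (fZ muZ * fZ lamZ)⁻¹ := by
    have := hE (Multiplicative.ofAdd (0, 1))
    simpa [psiX, phiX, psiZ, zsqHom, _root_.map_mul, _root_.map_inv] using this
  have hE10 : fX mu35 = fZ muZ := by
    have := hE (Multiplicative.ofAdd (1, 0))
    simpa [psiX, phiX, psiZ, zsqHom] using this
  -- deduce triviality of the meridian
  have hlamX1 : fX lam35 = 1 := by rw [hlamX, hmuX]; exact hlam35
  have hmuZ1 : fZ muZ = 1 := by
    have h := hE01
    rw [hlamX1, hfZlam, mul_one] at h
    exact inv_eq_one.mp h.symm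
  have hmuX1 : fX mu35 = 1 := by rw [hE10, hmuZ1]
  have hmu1_1 : f1 muN27 = 1 := by rw [← hfZmu, hmuZ1]
  have hmu2_1 : f2 muN27 = 1 := by
    have h := amalg_comm (zpowersHom (TK (-2) 7) muN27) (zpowersHom (TK (-2) 7) muN27)
      (Multiplicative.ofAdd 1)
    have h' : f1 muN27 = f2 muN27 := by
      have := congrArg fZ h
      simpa [hf1, hf2, zpowersHom_apply] using this
    rw [← h', hmu1_1]
  -- generators trivial
  have hx35 : fX (tkx 3 5) = 1 := by
    rw [← hmu35_5, ← hmuX, hmuX1, _root_.one_zpow]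
  have hy35 : fX (tky 3 5) = 1 := by
    rw [← hmu35_3, ← hmuX, hmuX1, _root_.one_zpow]
  have hx1 : f1 (tkx (-2) 7) = 1 := by rw [← hmu1_7, ← hmu1, hmu1_1, _root_.one_zpow]
  have hy1 : f1 (tky (-2) 7) = 1 := by rw [← hmu1_m2, ← hmu1, hmu1_1, _root_.one_zpow]
  have hx2 : f2 (tkx (-2) 7) = 1 := by rw [← hmu2_7, ← hmu2, hmu2_1, _root_.one_zpow]
  have hy2 : f2 (tky (-2) 7) = 1 := by rw [← hmu2_m2, ← hmu2, hmu2_1, _root_.one_zpow]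
  -- conclude
  have hfXtriv : ∀ w, fX w = 1 := tk_hom_trivial fX hx35 hy35
  have hfZtriv : ∀ w, fZ w = 1 :=
    amalg_hom_trivial _ _ fZ (tk_hom_trivial f1 hx1 hy1) (tk_hom_trivial f2 hx2 hy2)
  exact amalg_hom_trivial _ _ F hfXtriv hfZtriv g

end CS

open CS in
/-- `Σ₂` is a homology 3-sphere: the abelianization of `π₁(Σ₂)` is trivial. -/
theorem abelianization_Pi1Sigma2_trivial : Subsingleton (Abelianization Pi1Sigma2) := by
  have key : ∀ g : Pi1Sigma2, (Abelianization.of g : Abelianization Pi1Sigma2) = 1 :=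
    pi1Sigma2_hom_trivial Abelianization.of
  constructor
  intro x y
  have hx : ∀ z : Abelianization Pi1Sigma2, z = 1 := fun z =>
    QuotientGroup.induction_on z key
  rw [hx x, hx y]
end
end

section
/- Let G be the iterated pushout identifying the meridians of G_{3,5}, G_{−2,7}, and G_{−2,7} to a common element m (the group of the connected sum T_{3,5} # T_{−2,7} # T_{−2,7}), and let λ_X, λ⁽¹⁾, λ⁽²⁾ denote the images in G of the three longitudes. Then π₁(Σ₂) is isomorphic to the quotient of G by the normal closure of the single element m λ_X λ⁽¹⁾ λ⁽²⁾ (the fundamental group of +1 Dehn surgery on T_{3,5} # T_{−2,7} # T_{−2,7}). -/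
open Matrix

noncomputable section

namespace CS

/-- The group of the connected sum `T(3,5) # T(-2,7) # T(-2,7)`: the iterated pushout
identifying all three meridians to a common element. -/
abbrev SumKnotGroup2 : Type _ :=
  Amalg (zpowersHom (TK 3 5) mu35) (zpowersHom Pi1Z muZ)

/-- The normal closure of `m λ_X λ⁽¹⁾ λ⁽²⁾`, the relation of `+1` surgery. -/
def surgeryRel2 : Subgroup SumKnotGroup2 :=
  Subgroup.normalClosure
    {Amalg.inl (zpowersHom (TK 3 5) mu35) (zpowersHom Pi1Z muZ) mu35 *
      Amalg.inl (zpowersHom (TK 3 5) mu35) (zpowersHom Pi1Z muZ) lam35 *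
      Amalg.inr (zpowersHom (TK 3 5) mu35) (zpowersHom Pi1Z muZ)
        (Amalg.inl (zpowersHom (TK (-2) 7) muN27) (zpowersHom (TK (-2) 7) muN27) lamN27) *
      Amalg.inr (zpowersHom (TK 3 5) mu35) (zpowersHom Pi1Z muZ)
        (Amalg.inr (zpowersHom (TK (-2) 7) muN27) (zpowersHom (TK (-2) 7) muN27) lamN27)}

instance : surgeryRel2.Normal := Subgroup.normalClosure_normal

end CS

namespace CS

section Surgery2Proof

/-- Left amalgamation map of `SumKnotGroup2`. -/
noncomputable abbrev phiK : Multiplicative ℤ →* TK 3 5 := zpowersHom (TK 3 5) mu35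
/-- Right amalgamation map of `SumKnotGroup2`. -/
noncomputable abbrev psiK : Multiplicative ℤ →* Pi1Z := zpowersHom Pi1Z muZ

/-- The canonical map from the coproduct to the surgered group. -/
noncomputable def toQ : Monoid.Coprod (TK 3 5) Pi1Z →* (SumKnotGroup2 ⧸ surgeryRel2) :=
  ((QuotientGroup.mk' surgeryRel2).comp (QuotientGroup.mk' (amalgRel phiK psiK)))

noncomputable def iQ : TK 3 5 →* (SumKnotGroup2 ⧸ surgeryRel2) := toQ.comp Monoid.Coprod.inl
noncomputable def jQ : Pi1Z →* (SumKnotGroup2 ⧸ surgeryRel2) := toQ.comp Monoid.Coprod.inr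

lemma iQ_mu : iQ mu35 = jQ muZ := by
  have h := amalg_comm phiK psiK (Multiplicative.ofAdd 1)
  simp only [zpowersHom_apply, toAdd_ofAdd, zpow_one] at h
  exact congrArg (QuotientGroup.mk' surgeryRel2) h

lemma psiX_apply (m n : ℤ) : psiX (Multiplicative.ofAdd (m, n)) = mu35 ^ m * lam35 ^ n := rfl

lemma psiZ_apply (m n : ℤ) :
    psiZ (Multiplicative.ofAdd (m, n)) = muZ ^ m * ((muZ * lamZ)⁻¹) ^ n := rfl

lemma lamZ_eq : lamZ =
    Amalg.inl (zpowersHom (TK (-2) 7) muN27) (zpowersHom (TK (-2) 7) muN27) lamN27 *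
    Amalg.inr (zpowersHom (TK (-2) 7) muN27) (zpowersHom (TK (-2) 7) muN27) lamN27 := rfl

lemma toQ_rel : iQ mu35 * iQ lam35 * jQ lamZ = 1 := by
  have hmem : Amalg.inl phiK psiK mu35 * Amalg.inl phiK psiK lam35 *
      Amalg.inr phiK psiK
        (Amalg.inl (zpowersHom (TK (-2) 7) muN27) (zpowersHom (TK (-2) 7) muN27) lamN27) *
      Amalg.inr phiK psiK
        (Amalg.inr (zpowersHom (TK (-2) 7) muN27) (zpowersHom (TK (-2) 7) muN27) lamN27)
      ∈ surgeryRel2 := Subgroup.subset_normalClosure rfl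
  have h1 := (QuotientGroup.eq_one_iff _).mpr hmem
  rw [lamZ_eq, _root_.map_mul, ← mul_assoc]
  exact h1

lemma iQ_lam : iQ lam35 = jQ ((muZ * lamZ)⁻¹) := by
  have hrel := toQ_rel
  have hc : Commute (jQ muZ) (jQ lamZ) := muZ_lamZ_comm.map jQ
  have h2 : iQ lam35 = (iQ mu35)⁻¹ * (jQ lamZ)⁻¹ := by
    rw [mul_eq_one_iff_eq_inv] at hrel
    rw [← hrel]; group
  rw [h2, iQ_mu, _root_.map_inv jQ, _root_.map_mul jQ, _root_.mul_inv_rev]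
  exact hc.inv_inv.eq

set_option maxHeartbeats 1000000 in
lemma toQ_psi (z : Z2) : iQ (psiX z) = jQ (psiZ z) := by
  show iQ (mu35 ^ (Multiplicative.toAdd z).1 * lam35 ^ (Multiplicative.toAdd z).2) =
    jQ (muZ ^ (Multiplicative.toAdd z).1 * ((muZ * lamZ)⁻¹) ^ (Multiplicative.toAdd z).2)
  rw [ _root_.map_mul, _root_.map_mul, _root_.map_zpow, _root_.map_zpow, _root_.map_zpow, _root_.map_zpow,
    iQ_mu, iQ_lam]

lemma amalgRel_le_kerQ : amalgRel psiX psiZ ≤ toQ.ker := by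
  apply Subgroup.normalClosure_le_normal
  rintro _ ⟨z, rfl⟩
  have h : iQ (psiX z) = jQ (psiZ z) := toQ_psi z
  simp only [MonoidHom.mem_ker, _root_.map_mul, _root_.map_inv]
  show iQ (psiX z) * (jQ (psiZ z))⁻¹ = 1
  rw [h, mul_inv_cancel]

noncomputable def Fmap : Pi1Sigma2 →* (SumKnotGroup2 ⧸ surgeryRel2) :=
  QuotientGroup.lift (amalgRel psiX psiZ) toQ amalgRel_le_kerQ

noncomputable def toP : Monoid.Coprod (TK 3 5) Pi1Z →* Pi1Sigma2 :=
  QuotientGroup.mk' (amalgRel psiX psiZ)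

noncomputable def iP : TK 3 5 →* Pi1Sigma2 := Amalg.inl psiX psiZ
noncomputable def jP : Pi1Z →* Pi1Sigma2 := Amalg.inr psiX psiZ

lemma iP_mu : iP mu35 = jP muZ := by
  have h := amalg_comm psiX psiZ (Multiplicative.ofAdd ((1 : ℤ), (0 : ℤ)))
  rw [psiX_apply, psiZ_apply] at h
  simpa [iP, jP] using h

lemma iP_lam : iP lam35 = jP ((muZ * lamZ)⁻¹) := by
  have h := amalg_comm psiX psiZ (Multiplicative.ofAdd ((0 : ℤ), (1 : ℤ)))
  rw [psiX_apply, psiZ_apply] at h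
  simpa [iP, jP] using h

lemma amalgRelK_le_kerP : amalgRel phiK psiK ≤ toP.ker := by
  apply Subgroup.normalClosure_le_normal
  rintro _ ⟨a, rfl⟩
  simp only [MonoidHom.mem_ker, _root_.map_mul, _root_.map_inv, zpowersHom_apply]
  show iP (mu35 ^ Multiplicative.toAdd a) * (jP (muZ ^ Multiplicative.toAdd a))⁻¹ = 1
  rw [_root_.map_zpow, _root_.map_zpow, iP_mu, mul_inv_cancel]

noncomputable def Gmap1 : SumKnotGroup2 →* Pi1Sigma2 :=
  QuotientGroup.lift (amalgRel phiK psiK) toP amalgRelK_le_kerP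

lemma Gmap1_inl (g : TK 3 5) : Gmap1 (Amalg.inl phiK psiK g) = iP g := rfl
lemma Gmap1_inr (h : Pi1Z) : Gmap1 (Amalg.inr phiK psiK h) = jP h := rfl

lemma surgeryRel2_le_kerG : surgeryRel2 ≤ Gmap1.ker := by
  apply Subgroup.normalClosure_le_normal
  rintro _ rfl
  rw [SetLike.mem_coe, MonoidHom.mem_ker, _root_.map_mul, _root_.map_mul, _root_.map_mul,
    Gmap1_inl, Gmap1_inl, Gmap1_inr, Gmap1_inr]
  have hz : muZ * (muZ * lamZ)⁻¹ * lamZ = 1 := by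
    rw [muZ_lamZ_comm.eq]; group
  rw [mul_assoc, ← _root_.map_mul jP, ← lamZ_eq, iP_mu, iP_lam, ← _root_.map_mul jP,
    ← _root_.map_mul jP, hz, _root_.map_one]

noncomputable def Gmap : (SumKnotGroup2 ⧸ surgeryRel2) →* Pi1Sigma2 :=
  QuotientGroup.lift surgeryRel2 Gmap1 surgeryRel2_le_kerG

lemma GF_id : Gmap.comp Fmap = MonoidHom.id Pi1Sigma2 := by
  apply QuotientGroup.monoidHom_ext
  apply Monoid.Coprod.hom_ext
  · exact MonoidHom.ext fun x => rfl
  · exact MonoidHom.ext fun x => rfl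

lemma FG_id : Fmap.comp Gmap = MonoidHom.id (SumKnotGroup2 ⧸ surgeryRel2) := by
  apply QuotientGroup.monoidHom_ext
  apply QuotientGroup.monoidHom_ext
  apply Monoid.Coprod.hom_ext
  · exact MonoidHom.ext fun x => rfl
  · exact MonoidHom.ext fun x => rfl

end Surgery2Proof
end CS

open CS in
/-- `π₁(Σ₂)` is the fundamental group of `+1` surgery on
`T(3,5) # T(-2,7) # T(-2,7)`. -/
theorem Pi1Sigma2_is_surgery : Nonempty (Pi1Sigma2 ≃* (SumKnotGroup2 ⧸ surgeryRel2)) := by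
  exact ⟨Fmap.toMulEquiv Gmap GF_id FG_id⟩
end
end

section
/- Let ρ₁, ρ₂: G_{−2,7} → SU(2) be irreducible representations with ρ₁(μ) = ρ₂(μ) = diag(e^{ir}, e^{−ir}) for some r ∈ (0, π). Then the subspace of χ(π₁(Z)) consisting of classes [ρ] whose restriction to the first copy of G_{−2,7} is conjugate to ρ₁ and whose restriction to the second copy is conjugate to ρ₂ is homeomorphic to a circle. -/
open Matrix

noncomputable section

namespace CS

open Complex

local notation "M2" => Matrix (Fin 2) (Fin 2) ℂ

lemma su2_star_mul_self (A : SU2) : star (A : M2) * (A : M2) = 1 :=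
  (Submonoid.mem_inf.mp A.2).1.1

lemma su2_self_mul_star (A : SU2) : (A : M2) * star (A : M2) = 1 :=
  (Submonoid.mem_inf.mp A.2).1.2

lemma su2_det (A : SU2) : (A : M2).det = 1 := (Submonoid.mem_inf.mp A.2).2

lemma su2_coe_inv (A : SU2) : ((A⁻¹ : SU2) : M2) = star (A : M2) := rfl

lemma su2_star_eq_adjugate (A : SU2) : star (A : M2) = (A : M2).adjugate := by
  have h1 : (A : M2) * (A : M2).adjugate = 1 := by
    rw [Matrix.mul_adjugate, su2_det, one_smul]
  calc star (A : M2) = star (A : M2) * ((A : M2) * (A : M2).adjugate) := by rw [h1, mul_one]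
    _ = (star (A : M2) * (A : M2)) * (A : M2).adjugate := by rw [mul_assoc]
    _ = (A : M2).adjugate := by rw [su2_star_mul_self, one_mul]

lemma su2_apply_one_one (A : SU2) : (A : M2) 1 1 = starRingEnd ℂ ((A : M2) 0 0) := by
  have := congrFun (congrFun (su2_star_eq_adjugate A) 0) 0
  rw [Matrix.star_eq_conjTranspose, Matrix.conjTranspose_apply, Matrix.adjugate_fin_two] at this
  simp [Matrix.cons_val_zero, Matrix.cons_val_one] at this
  exact this.symm

lemma su2_apply_zero_one (A : SU2) :
    (A : M2) 0 1 = - starRingEnd ℂ ((A : M2) 1 0) := by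
  have := congrFun (congrFun (su2_star_eq_adjugate A) 0) 1
  rw [Matrix.star_eq_conjTranspose, Matrix.conjTranspose_apply, Matrix.adjugate_fin_two] at this
  simp [Matrix.cons_val_zero, Matrix.cons_val_one] at this
  linear_combination this

lemma su2_one_zero_of_zero_one {A : SU2} (h : (A : M2) 0 1 = 0) : (A : M2) 1 0 = 0 := by
  have := su2_apply_zero_one A
  rw [h] at this
  simpa using neg_eq_zero.mp this.symm

lemma commute_of_offdiag_zero {A B : M2}
    (hA01 : A 0 1 = 0) (hA10 : A 1 0 = 0) (hB01 : B 0 1 = 0) (hB10 : B 1 0 = 0) :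
    A * B = B * A := by
  ext i j
  fin_cases i <;> fin_cases j <;>
    simp [Matrix.mul_apply, Fin.sum_univ_two, hA01, hA10, hB01, hB10, mul_comm]

/-- An irreducible representation has an element with nonzero upper-right entry. -/
lemma exists_offdiag {G : Type*} [Group G] {ρ : G →* SU2} (h : IsIrrep ρ) :
    ∃ a : G, ((ρ a : SU2) : M2) 0 1 ≠ 0 := by
  by_contra hc
  push_neg at hc
  refine h fun g g' => ?_
  have e1 := hc g
  have e2 := hc g'
  exact Subtype.ext (commute_of_offdiag_zero e1 (su2_one_zero_of_zero_one e1) e2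
    (su2_one_zero_of_zero_one e2))

end CS

namespace CS

open Complex

section Lift

variable {A G H K : Type*} [Group A] [Group G] [Group H] [Group K]

/-- Universal property of the amalgamated product. -/
def Amalg.lift (φ : A →* G) (ψ : A →* H) (f : G →* K) (h : H →* K)
    (hfh : ∀ a, f (φ a) = h (ψ a)) : Amalg φ ψ →* K :=
  QuotientGroup.lift _ (Monoid.Coprod.lift f h) (by
    intro x hx
    refine Subgroup.normalClosure_le_normal ?_ hx
    rintro _ ⟨a, rfl⟩
    simp [Subgroup.mem_comap, MonoidHom.mem_ker, hfh a])

@[simp] lemma Amalg.lift_inl (φ : A →* G) (ψ : A →* H) (f : G →* K) (h : H →* K)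
    (hfh : ∀ a, f (φ a) = h (ψ a)) (g : G) :
    Amalg.lift φ ψ f h hfh (Amalg.inl φ ψ g) = f g := by
  simp [Amalg.lift, Amalg.inl]

@[simp] lemma Amalg.lift_inr (φ : A →* G) (ψ : A →* H) (f : G →* K) (h : H →* K)
    (hfh : ∀ a, f (φ a) = h (ψ a)) (g : H) :
    Amalg.lift φ ψ f h hfh (Amalg.inr φ ψ g) = h g := by
  simp [Amalg.lift, Amalg.inr]

/-- Homomorphisms out of an amalgam are determined by restrictions to the two factors. -/
lemma Amalg.hom_ext {φ : A →* G} {ψ : A →* H} {f g : Amalg φ ψ →* K}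
    (h1 : ∀ x, f (Amalg.inl φ ψ x) = g (Amalg.inl φ ψ x))
    (h2 : ∀ x, f (Amalg.inr φ ψ x) = g (Amalg.inr φ ψ x)) : f = g := by
  have hsurj : Function.Surjective (QuotientGroup.mk' (amalgRel φ ψ)) :=
    QuotientGroup.mk'_surjective _
  have : f.comp (QuotientGroup.mk' (amalgRel φ ψ)) = g.comp (QuotientGroup.mk' (amalgRel φ ψ)) := by
    apply Monoid.Coprod.hom_ext
    · ext x; exact h1 x
    · ext x; exact h2 x
  refine MonoidHom.ext fun y => ?_
  obtain ⟨x, rfl⟩ := hsurj y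
  exact DFunLike.congr_fun this x

end Lift

/-- Conjugate of a representation. -/
def conjRep {G : Type*} [Group G] (u : SU2) (ρ : G →* SU2) : G →* SU2 where
  toFun g := u * ρ g * u⁻¹
  map_one' := by simp
  map_mul' a b := by
    show u * ρ (a * b) * u⁻¹ = (u * ρ a * u⁻¹) * (u * ρ b * u⁻¹)
    rw [_root_.map_mul ρ]
    group

lemma charCl_conjRep {G : Type*} [Group G] (u : SU2) (ρ : G →* SU2) :
    charCl (conjRep u ρ) = charCl ρ := by
  refine Quotient.sound ?_
  exact (conjSetoid G).symm ⟨u, fun g => rfl⟩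

end CS

namespace CS

open Complex

/-- The diagonal unitary matrix `diag(z, 1)` for `z` on the circle. -/
def Mz (z : Circle) : Matrix (Fin 2) (Fin 2) ℂ := Matrix.diagonal ![(z : ℂ), 1]

lemma star_Mz (z : Circle) : star (Mz z) = Matrix.diagonal ![starRingEnd ℂ (z : ℂ), 1] := by
  unfold Mz
  rw [Matrix.star_eq_conjTranspose, Matrix.diagonal_conjTranspose]
  apply congrArg
  funext i
  fin_cases i <;> simp

lemma z_mul_conj (z : Circle) : (z : ℂ) * starRingEnd ℂ (z : ℂ) = 1 := by
  rw [Complex.mul_conj]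
  norm_cast
  simp

lemma Mz_mul_star (z : Circle) : Mz z * star (Mz z) = 1 := by
  rw [star_Mz]
  unfold Mz
  rw [Matrix.diagonal_mul_diagonal]
  have e : (fun i => (![(z : ℂ), 1] : Fin 2 → ℂ) i * (![starRingEnd ℂ (z : ℂ), 1] : Fin 2 → ℂ) i)
      = fun _ => (1 : ℂ) := by
    funext i; fin_cases i <;> simp [z_mul_conj z]
  rw [e]
  exact Matrix.diagonal_one

lemma star_Mz_mul (z : Circle) : star (Mz z) * Mz z = 1 := by
  rw [star_Mz]
  unfold Mz
  rw [Matrix.diagonal_mul_diagonal]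
  have e : (fun i => (![starRingEnd ℂ (z : ℂ), 1] : Fin 2 → ℂ) i * (![(z : ℂ), 1] : Fin 2 → ℂ) i)
      = fun _ => (1 : ℂ) := by
    funext i
    fin_cases i <;> simp [mul_comm, z_mul_conj z]
  rw [e]
  exact Matrix.diagonal_one

/-- Conjugating a special unitary matrix by a unitary matrix stays special unitary. -/
lemma conj_unitary_mem {U : Matrix (Fin 2) (Fin 2) ℂ}
    (hU1 : U * star U = 1) (hU2 : star U * U = 1) (A : SU2) :
    U * (A : Matrix (Fin 2) (Fin 2) ℂ) * star U ∈ Matrix.specialUnitaryGroup (Fin 2) ℂ := by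
  set B := (A : Matrix (Fin 2) (Fin 2) ℂ) with hB
  have hs : star (U * B * star U) = U * star B * star U := by
    simp [StarMul.star_mul, star_star, mul_assoc]
  have h1 : star (U * B * star U) * (U * B * star U) = 1 := by
    rw [hs]
    have e1 : U * star B * star U * (U * B * star U) = U * star B * (star U * U) * B * star U := by
      noncomm_ring
    rw [e1, hU2, mul_one, mul_assoc U (star B) B, su2_star_mul_self A, mul_one, hU1]
  have h2 : (U * B * star U) * star (U * B * star U) = 1 := by
    rw [hs]
    have e1 : U * B * star U * (U * star B * star U) = U * B * (star U * U) * star B * star U := by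
      noncomm_ring
    rw [e1, hU2, mul_one, mul_assoc U B (star B), su2_self_mul_star A, mul_one, hU1]
  have hdetU : U.det * (star U).det = 1 := by
    rw [← Matrix.det_mul, hU1, Matrix.det_one]
  have hdet : (U * B * star U).det = 1 := by
    rw [Matrix.det_mul, Matrix.det_mul, su2_det A, mul_one, hdetU]
  exact Submonoid.mem_inf.mpr ⟨⟨h1, h2⟩, by
    simpa only [MonoidHom.mem_mker, ← Matrix.coe_detMonoidHom] using hdet⟩

/-- Conjugation by `diag(z,1)` as an automorphism of `SU(2)`. -/
def cactHom (z : Circle) : SU2 →* SU2 where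
  toFun A := ⟨Mz z * (A : Matrix (Fin 2) (Fin 2) ℂ) * star (Mz z),
    conj_unitary_mem (Mz_mul_star z) (star_Mz_mul z) A⟩
  map_one' := by
    apply Subtype.ext
    show Mz z * 1 * star (Mz z) = 1
    rw [mul_one, Mz_mul_star]
  map_mul' A B := by
    apply Subtype.ext
    show Mz z * ((A : Matrix (Fin 2) (Fin 2) ℂ) * (B : Matrix (Fin 2) (Fin 2) ℂ)) * star (Mz z)
      = (Mz z * (A : Matrix (Fin 2) (Fin 2) ℂ) * star (Mz z)) *
        (Mz z * (B : Matrix (Fin 2) (Fin 2) ℂ) * star (Mz z))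
    have e1 : (Mz z * (A : Matrix (Fin 2) (Fin 2) ℂ) * star (Mz z)) *
        (Mz z * (B : Matrix (Fin 2) (Fin 2) ℂ) * star (Mz z))
        = Mz z * (A : Matrix (Fin 2) (Fin 2) ℂ) * (star (Mz z) * Mz z) *
          (B : Matrix (Fin 2) (Fin 2) ℂ) * star (Mz z) := by noncomm_ring
    rw [e1, star_Mz_mul, mul_one]
    noncomm_ring

lemma cactHom_coe (z : Circle) (A : SU2) :
    ((cactHom z A : SU2) : Matrix (Fin 2) (Fin 2) ℂ)
      = Mz z * (A : Matrix (Fin 2) (Fin 2) ℂ) * star (Mz z) := rfl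

lemma Mz_conj_diagU (z : Circle) (r : ℝ) : Mz z * diagU r * star (Mz z) = diagU r := by
  have hcomm : Mz z * diagU r = diagU r * Mz z := by
    unfold Mz diagU
    rw [Matrix.diagonal_mul_diagonal, Matrix.diagonal_mul_diagonal]
    apply congrArg
    funext i
    exact mul_comm _ _
  rw [hcomm, mul_assoc, Mz_mul_star, mul_one]

/-- The glued representation of `π₁(Z)` parametrized by `z` on the circle. -/
def glueRep (ρ1 ρ2 : TK (-2) 7 →* SU2) {r : ℝ}
    (hm1 : ((ρ1 muN27 : SU2) : Matrix (Fin 2) (Fin 2) ℂ) = diagU r)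
    (hm2 : ((ρ2 muN27 : SU2) : Matrix (Fin 2) (Fin 2) ℂ) = diagU r)
    (z : Circle) : Pi1Z →* SU2 :=
  Amalg.lift _ _ ρ1 ((cactHom z).comp ρ2) (by
    intro a
    simp only [MonoidHom.comp_apply, zpowersHom_apply]
    rw [map_zpow, map_zpow, map_zpow]
    congr 1
    apply Subtype.ext
    rw [cactHom_coe, hm1, hm2, Mz_conj_diagU])

lemma glueRep_inl (ρ1 ρ2 : TK (-2) 7 →* SU2) {r : ℝ}
    (hm1 : ((ρ1 muN27 : SU2) : Matrix (Fin 2) (Fin 2) ℂ) = diagU r)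
    (hm2 : ((ρ2 muN27 : SU2) : Matrix (Fin 2) (Fin 2) ℂ) = diagU r)
    (z : Circle) (g : TK (-2) 7) :
    glueRep ρ1 ρ2 hm1 hm2 z
      (Amalg.inl (zpowersHom (TK (-2) 7) muN27) (zpowersHom (TK (-2) 7) muN27) g) = ρ1 g :=
  Amalg.lift_inl _ _ _ _ _ g

lemma glueRep_inr (ρ1 ρ2 : TK (-2) 7 →* SU2) {r : ℝ}
    (hm1 : ((ρ1 muN27 : SU2) : Matrix (Fin 2) (Fin 2) ℂ) = diagU r)
    (hm2 : ((ρ2 muN27 : SU2) : Matrix (Fin 2) (Fin 2) ℂ) = diagU r)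
    (z : Circle) (g : TK (-2) 7) :
    glueRep ρ1 ρ2 hm1 hm2 z
      (Amalg.inr (zpowersHom (TK (-2) 7) muN27) (zpowersHom (TK (-2) 7) muN27) g)
      = cactHom z (ρ2 g) :=
  Amalg.lift_inr _ _ _ _ _ g

end CS

namespace CS

open Complex

/-- Conjugation by `c • M` with `c * c̄ = 1` equals conjugation by `M`. -/
lemma conj_smul_eq {c : ℂ} {Mm : Matrix (Fin 2) (Fin 2) ℂ} (hc : c * star c = 1)
    (A : Matrix (Fin 2) (Fin 2) ℂ) :
    (c • Mm) * A * star (c • Mm) = Mm * A * star Mm := by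
  rw [star_smul, Matrix.smul_mul, Matrix.smul_mul, Matrix.mul_smul, smul_smul, hc, one_smul]

lemma diagU_eq_smul_Mz (z : Circle) :
    diagU ((z : ℂ).arg / 2)
      = Complex.exp (((-((z : ℂ).arg / 2) : ℝ) : ℂ) * Complex.I) • Mz z := by
  set t := (z : ℂ).arg with ht
  have hz : (z : ℂ) = Complex.exp ((t : ℂ) * Complex.I) := by
    have h := Circle.exp_arg z
    rw [← h, Circle.coe_exp]
  unfold diagU Mz
  ext i j
  fin_cases i <;> fin_cases j
  · show Complex.exp (((t / 2 : ℝ) : ℂ) * Complex.I)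
      = Complex.exp (((-(t / 2) : ℝ) : ℂ) * Complex.I) * (z : ℂ)
    rw [hz, ← Complex.exp_add]
    congr 1
    push_cast
    ring
  · show (0 : ℂ) = _ * (Matrix.diagonal ![(z : ℂ), 1] 0 1)
    simp
  · show (0 : ℂ) = _ * (Matrix.diagonal ![(z : ℂ), 1] 1 0)
    simp
  · show Complex.exp (-((t / 2 : ℝ) : ℂ) * Complex.I)
      = Complex.exp (((-(t / 2) : ℝ) : ℂ) * Complex.I) * (1 : ℂ)
    rw [mul_one]
    congr 1
    push_cast
    ring

/-- Conjugation by `Mz z` agrees with conjugation by an `SU(2)` element. -/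
lemma cact_eq_su2_conj (z : Circle) (A : SU2) :
    ((cactHom z A : SU2) : Matrix (Fin 2) (Fin 2) ℂ)
      = ((diagSU ((z : ℂ).arg / 2) : SU2) : Matrix (Fin 2) (Fin 2) ℂ)
        * (A : Matrix (Fin 2) (Fin 2) ℂ)
        * star (((diagSU ((z : ℂ).arg / 2) : SU2) : Matrix (Fin 2) (Fin 2) ℂ)) := by
  have hcoe : ((diagSU ((z : ℂ).arg / 2) : SU2) : Matrix (Fin 2) (Fin 2) ℂ)
      = diagU ((z : ℂ).arg / 2) := rfl
  have hc : Complex.exp (((-((z : ℂ).arg / 2) : ℝ) : ℂ) * Complex.I)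
      * star (Complex.exp (((-((z : ℂ).arg / 2) : ℝ) : ℂ) * Complex.I)) = 1 := by
    rw [star_exp_I (-((z : ℂ).arg / 2))]
    exact exp_I_mul_exp_neg_I (-((z : ℂ).arg / 2))
  rw [cactHom_coe, hcoe, diagU_eq_smul_Mz z, conj_smul_eq hc]

lemma exp_ir_ne {r : ℝ} (hr : r ∈ Set.Ioo 0 Real.pi) :
    Complex.exp ((r : ℂ) * Complex.I) ≠ Complex.exp (-(r : ℂ) * Complex.I) := by
  intro h
  rw [Complex.exp_eq_exp_iff_exists_int] at h
  obtain ⟨n, hn⟩ := h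
  have him := congrArg Complex.im hn
  have h2r : 2 * r = (n : ℝ) * (2 * Real.pi) := by
    simp only [Complex.mul_im, Complex.ofReal_re, Complex.I_im, Complex.ofReal_im, Complex.I_re,
      mul_zero, mul_one, zero_mul, add_zero, Complex.add_im, Complex.neg_im, Complex.neg_re,
      Complex.mul_re, Complex.intCast_im, Complex.intCast_re, Complex.ofReal_mul,
      Complex.ofReal_ofNat, zero_add, sub_zero, Complex.re_ofNat, Complex.im_ofNat] at him
    linarith
  have hn0 : (0 : ℝ) < (n : ℝ) := by nlinarith [Real.pi_pos, hr.1]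
  have hn1 : (n : ℝ) < 1 := by nlinarith [Real.pi_pos, hr.2]
  have hgt : (0 : ℤ) < n := by exact_mod_cast hn0
  have hge : (1 : ℝ) ≤ (n : ℝ) := by exact_mod_cast hgt
  linarith

lemma commute_diagU_offdiag {r : ℝ} (hr : r ∈ Set.Ioo 0 Real.pi)
    {v : Matrix (Fin 2) (Fin 2) ℂ} (h : v * diagU r = diagU r * v) :
    v 0 1 = 0 ∧ v 1 0 = 0 := by
  have hne := exp_ir_ne hr
  have h01 : v 0 1 * Complex.exp (-(r : ℂ) * Complex.I)
      = Complex.exp ((r : ℂ) * Complex.I) * v 0 1 := by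
    have hent := congrFun (congrFun h 0) 1
    unfold diagU at hent
    rw [Matrix.mul_diagonal, Matrix.diagonal_mul] at hent
    simpa using hent
  have h10 : v 1 0 * Complex.exp ((r : ℂ) * Complex.I)
      = Complex.exp (-(r : ℂ) * Complex.I) * v 1 0 := by
    have hent := congrFun (congrFun h 1) 0
    unfold diagU at hent
    rw [Matrix.mul_diagonal, Matrix.diagonal_mul] at hent
    simpa using hent
  constructor
  · have hz : v 0 1 * (Complex.exp (-(r : ℂ) * Complex.I)
        - Complex.exp ((r : ℂ) * Complex.I)) = 0 := by linear_combination h01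
    rcases mul_eq_zero.mp hz with h' | h'
    · exact h'
    · exact absurd (sub_eq_zero.mp h').symm hne
  · have hz : v 1 0 * (Complex.exp ((r : ℂ) * Complex.I)
        - Complex.exp (-(r : ℂ) * Complex.I)) = 0 := by linear_combination h10
    rcases mul_eq_zero.mp hz with h' | h'
    · exact h'
    · exact absurd (sub_eq_zero.mp h') hne

/-- A diagonal element of `SU(2)` conjugates like `Mz z` for some `z` on the circle. -/
lemma diag_su2_form (v : SU2) (h01 : (v : Matrix (Fin 2) (Fin 2) ℂ) 0 1 = 0)
    (h10 : (v : Matrix (Fin 2) (Fin 2) ℂ) 1 0 = 0) :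
    ∃ z : Circle, ∀ A : Matrix (Fin 2) (Fin 2) ℂ,
      (v : Matrix (Fin 2) (Fin 2) ℂ) * A * star (v : Matrix (Fin 2) (Fin 2) ℂ)
        = Mz z * A * star (Mz z) := by
  set w := (v : Matrix (Fin 2) (Fin 2) ℂ) 0 0 with hw
  have h11 : (v : Matrix (Fin 2) (Fin 2) ℂ) 1 1 = starRingEnd ℂ w := su2_apply_one_one v
  have hdet : w * starRingEnd ℂ w = 1 := by
    have hd := su2_det v
    rw [Matrix.det_fin_two, h01, h11] at hd
    linear_combination hd
  have h2 : Complex.normSq w = 1 := by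
    have hcc := Complex.mul_conj w
    rw [hdet] at hcc
    exact_mod_cast hcc.symm
  have habs : ‖w‖ = 1 := by
    have := Complex.normSq_eq_norm_sq w
    nlinarith [norm_nonneg w]
  have hmem : w ^ 2 ∈ Submonoid.unitSphere ℂ := mem_sphere_zero_iff_norm.2 (by
    rw [norm_pow, habs]; norm_num)
  refine ⟨⟨w ^ 2, hmem⟩, fun A => ?_⟩
  have hveq : (v : Matrix (Fin 2) (Fin 2) ℂ)
      = starRingEnd ℂ w • Mz ⟨w ^ 2, hmem⟩ := by
    ext i j
    fin_cases i <;> fin_cases j <;>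
      simp [Mz, Matrix.smul_apply, Matrix.diagonal_apply, h01, h10, h11]
    linear_combination (-w) * hdet
  have hc : starRingEnd ℂ w * star (starRingEnd ℂ w) = 1 := by
    have : star (starRingEnd ℂ w) = w := by simp
    rw [this, mul_comm]
    exact hdet
  rw [hveq]
  exact conj_smul_eq hc A

end CS

namespace CS

open Complex

/-- Trace of the value at a fixed group element, as a function on the character variety. -/
def trFn {G : Type*} [Group G] (x : G) : CharVar G → ℂ :=
  Quotient.lift (fun ρ : G →* SU2 => Matrix.trace ((ρ x : SU2) : Matrix (Fin 2) (Fin 2) ℂ))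
    (by
      rintro ρ σ ⟨u, hu⟩
      rw [hu x]
      have hcoe : ((u * ρ x * u⁻¹ : SU2) : Matrix (Fin 2) (Fin 2) ℂ)
          = (u : Matrix (Fin 2) (Fin 2) ℂ) * ((ρ x : SU2) : Matrix (Fin 2) (Fin 2) ℂ)
            * star (u : Matrix (Fin 2) (Fin 2) ℂ) := rfl
      rw [hcoe, Matrix.trace_mul_cycle, su2_star_mul_self, one_mul])

lemma trFn_charCl {G : Type*} [Group G] (x : G) (ρ : G →* SU2) :
    trFn x (charCl ρ) = Matrix.trace ((ρ x : SU2) : Matrix (Fin 2) (Fin 2) ℂ) := rfl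

lemma continuous_trFn {G : Type*} [Group G] (x : G) : Continuous (trFn x) := by
  apply Continuous.quotient_lift
  have h1 : Continuous (fun ρ : G →* SU2 => ρ x) := by
    have hc : Continuous (fun ρ : G →* SU2 => (ρ : G → SU2)) := continuous_induced_dom
    exact (continuous_apply x).comp hc
  exact (continuous_subtype_val.comp h1).matrix_trace

lemma continuous_Mz : Continuous fun z : Circle => Mz z := by
  apply Continuous.matrix_diagonal
  apply continuous_pi
  intro i
  fin_cases i
  · exact continuous_subtype_val
  · exact continuous_const

/-- Pointwise continuity of the glued family of representations. -/
lemma continuous_glueRep_apply (ρ1 ρ2 : TK (-2) 7 →* SU2) {r : ℝ}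
    (hm1 : ((ρ1 muN27 : SU2) : Matrix (Fin 2) (Fin 2) ℂ) = diagU r)
    (hm2 : ((ρ2 muN27 : SU2) : Matrix (Fin 2) (Fin 2) ℂ) = diagU r)
    (x : Pi1Z) :
    Continuous fun z : Circle =>
      ((glueRep ρ1 ρ2 hm1 hm2 z x : SU2) : Matrix (Fin 2) (Fin 2) ℂ) := by
  obtain ⟨y, rfl⟩ := QuotientGroup.mk'_surjective
    (amalgRel (zpowersHom (TK (-2) 7) muN27) (zpowersHom (TK (-2) 7) muN27)) x
  induction y using Monoid.Coprod.induction_on with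
  | inl m =>
      have he : ∀ z : Circle, glueRep ρ1 ρ2 hm1 hm2 z (QuotientGroup.mk' _ (Monoid.Coprod.inl m))
          = ρ1 m := fun z => glueRep_inl ρ1 ρ2 hm1 hm2 z m
      simp only [he]
      exact continuous_const
  | inr n =>
      have he : ∀ z : Circle, glueRep ρ1 ρ2 hm1 hm2 z (QuotientGroup.mk' _ (Monoid.Coprod.inr n))
          = cactHom z (ρ2 n) := fun z => glueRep_inr ρ1 ρ2 hm1 hm2 z n
      simp only [he, cactHom_coe]
      exact (continuous_Mz.mul continuous_const).mul continuous_Mz.matrix_conjTranspose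
  | mul p q hp hq =>
      have he : ∀ z : Circle,
          ((glueRep ρ1 ρ2 hm1 hm2 z (QuotientGroup.mk' _ (p * q)) : SU2)
            : Matrix (Fin 2) (Fin 2) ℂ)
          = ((glueRep ρ1 ρ2 hm1 hm2 z (QuotientGroup.mk' _ p) : SU2)
              : Matrix (Fin 2) (Fin 2) ℂ)
            * ((glueRep ρ1 ρ2 hm1 hm2 z (QuotientGroup.mk' _ q) : SU2)
              : Matrix (Fin 2) (Fin 2) ℂ) := by
        intro z
        rw [_root_.map_mul (QuotientGroup.mk'
          (amalgRel (zpowersHom (TK (-2) 7) muN27) (zpowersHom (TK (-2) 7) muN27))),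
          _root_.map_mul (glueRep ρ1 ρ2 hm1 hm2 z)]
        rfl
      simp only [he]
      exact hp.mul hq

lemma continuous_glueRep (ρ1 ρ2 : TK (-2) 7 →* SU2) {r : ℝ}
    (hm1 : ((ρ1 muN27 : SU2) : Matrix (Fin 2) (Fin 2) ℂ) = diagU r)
    (hm2 : ((ρ2 muN27 : SU2) : Matrix (Fin 2) (Fin 2) ℂ) = diagU r) :
    Continuous fun z : Circle => glueRep ρ1 ρ2 hm1 hm2 z := by
  rw [continuous_induced_rng]
  apply continuous_pi
  intro x
  rw [continuous_induced_rng]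
  exact continuous_glueRep_apply ρ1 ρ2 hm1 hm2 x

/-- Every class in the gluing set is the class of some `glueRep z`. -/
lemma exists_glueRep_class (ρ1 ρ2 : TK (-2) 7 →* SU2) {r : ℝ} (hr : r ∈ Set.Ioo 0 Real.pi)
    (hm1 : ((ρ1 muN27 : SU2) : Matrix (Fin 2) (Fin 2) ℂ) = diagU r)
    (hm2 : ((ρ2 muN27 : SU2) : Matrix (Fin 2) (Fin 2) ℂ) = diagU r)
    (ρ : Pi1Z →* SU2)
    (hu : ∃ u : SU2, ∀ g : TK (-2) 7,
      ρ (Amalg.inl (zpowersHom (TK (-2) 7) muN27) (zpowersHom (TK (-2) 7) muN27) g)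
        = u * ρ1 g * u⁻¹)
    (hv : ∃ u : SU2, ∀ g : TK (-2) 7,
      ρ (Amalg.inr (zpowersHom (TK (-2) 7) muN27) (zpowersHom (TK (-2) 7) muN27) g)
        = u * ρ2 g * u⁻¹) :
    ∃ z : Circle, charCl ρ = charCl (glueRep ρ1 ρ2 hm1 hm2 z) := by
  obtain ⟨u, hu⟩ := hu
  obtain ⟨v, hv⟩ := hv
  set ρ' := conjRep u⁻¹ ρ with hρ'
  have hcl : charCl ρ = charCl ρ' := (charCl_conjRep u⁻¹ ρ).symm
  have hinl : ∀ g, ρ' (Amalg.inl (zpowersHom (TK (-2) 7) muN27)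
      (zpowersHom (TK (-2) 7) muN27) g) = ρ1 g := by
    intro g
    show u⁻¹ * ρ (Amalg.inl _ _ g) * u⁻¹⁻¹ = ρ1 g
    rw [hu g]
    group
  set v' := u⁻¹ * v with hv'
  have hinr : ∀ g, ρ' (Amalg.inr (zpowersHom (TK (-2) 7) muN27)
      (zpowersHom (TK (-2) 7) muN27) g) = v' * ρ2 g * v'⁻¹ := by
    intro g
    show u⁻¹ * ρ (Amalg.inr _ _ g) * u⁻¹⁻¹ = (u⁻¹ * v) * ρ2 g * (u⁻¹ * v)⁻¹
    rw [hv g]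
    group
  have hmu : (Amalg.inl (zpowersHom (TK (-2) 7) muN27) (zpowersHom (TK (-2) 7) muN27) muN27
        : Pi1Z)
      = Amalg.inr (zpowersHom (TK (-2) 7) muN27) (zpowersHom (TK (-2) 7) muN27) muN27 :=
    muZ_eq_inr
  have h1 : ρ1 muN27 = v' * ρ2 muN27 * v'⁻¹ := by
    rw [← hinl muN27, hmu, hinr muN27]
  have hh : diagU r = (v' : Matrix (Fin 2) (Fin 2) ℂ) * diagU r
      * star (v' : Matrix (Fin 2) (Fin 2) ℂ) := by
    have hval := congrArg (Subtype.val) h1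
    have hrhs : ((v' * ρ2 muN27 * v'⁻¹ : SU2) : Matrix (Fin 2) (Fin 2) ℂ)
        = (v' : Matrix (Fin 2) (Fin 2) ℂ) * ((ρ2 muN27 : SU2) : Matrix (Fin 2) (Fin 2) ℂ)
          * star (v' : Matrix (Fin 2) (Fin 2) ℂ) := rfl
    rw [hrhs, hm1, hm2] at hval
    exact hval
  have hcm : (v' : Matrix (Fin 2) (Fin 2) ℂ) * diagU r
      = diagU r * (v' : Matrix (Fin 2) (Fin 2) ℂ) := by
    have : diagU r * (v' : Matrix (Fin 2) (Fin 2) ℂ)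
        = (v' : Matrix (Fin 2) (Fin 2) ℂ) * diagU r := by
      calc diagU r * (v' : Matrix (Fin 2) (Fin 2) ℂ)
          = (v' : Matrix (Fin 2) (Fin 2) ℂ) * diagU r * star (v' : Matrix (Fin 2) (Fin 2) ℂ)
            * (v' : Matrix (Fin 2) (Fin 2) ℂ) := by rw [← hh]
        _ = (v' : Matrix (Fin 2) (Fin 2) ℂ) * diagU r
            * (star (v' : Matrix (Fin 2) (Fin 2) ℂ) * (v' : Matrix (Fin 2) (Fin 2) ℂ)) := by
            rw [mul_assoc]
        _ = (v' : Matrix (Fin 2) (Fin 2) ℂ) * diagU r := by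
            rw [su2_star_mul_self, mul_one]
    exact this.symm
  obtain ⟨h01, h10⟩ := commute_diagU_offdiag hr hcm
  obtain ⟨z, hconj⟩ := diag_su2_form v' h01 h10
  refine ⟨z, hcl.trans ?_⟩
  have heq : ρ' = glueRep ρ1 ρ2 hm1 hm2 z := by
    apply Amalg.hom_ext
    · intro g
      rw [hinl g, glueRep_inl]
    · intro g
      rw [hinr g, glueRep_inr]
      apply Subtype.ext
      show (v' : Matrix (Fin 2) (Fin 2) ℂ) * ((ρ2 g : SU2) : Matrix (Fin 2) (Fin 2) ℂ)
        * star (v' : Matrix (Fin 2) (Fin 2) ℂ) = _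
      rw [hconj ((ρ2 g : SU2) : Matrix (Fin 2) (Fin 2) ℂ), ← cactHom_coe]
  rw [heq]

end CS

namespace CS

open Complex

lemma trace_glueRep_pair (ρ1 ρ2 : TK (-2) 7 →* SU2) {r : ℝ}
    (hm1 : ((ρ1 muN27 : SU2) : Matrix (Fin 2) (Fin 2) ℂ) = diagU r)
    (hm2 : ((ρ2 muN27 : SU2) : Matrix (Fin 2) (Fin 2) ℂ) = diagU r)
    (a b : TK (-2) 7) (z : Circle) :
    Matrix.trace ((glueRep ρ1 ρ2 hm1 hm2 z
        (Amalg.inl (zpowersHom (TK (-2) 7) muN27) (zpowersHom (TK (-2) 7) muN27) a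
          * Amalg.inr (zpowersHom (TK (-2) 7) muN27) (zpowersHom (TK (-2) 7) muN27) b)
      : SU2) : Matrix (Fin 2) (Fin 2) ℂ)
    = ((ρ1 a : SU2) : Matrix (Fin 2) (Fin 2) ℂ) 0 0
        * ((ρ2 b : SU2) : Matrix (Fin 2) (Fin 2) ℂ) 0 0
      + ((ρ1 a : SU2) : Matrix (Fin 2) (Fin 2) ℂ) 1 1
        * ((ρ2 b : SU2) : Matrix (Fin 2) (Fin 2) ℂ) 1 1
      + (((ρ1 a : SU2) : Matrix (Fin 2) (Fin 2) ℂ) 1 0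
          * ((ρ2 b : SU2) : Matrix (Fin 2) (Fin 2) ℂ) 0 1) * (z : ℂ)
      + (((ρ1 a : SU2) : Matrix (Fin 2) (Fin 2) ℂ) 0 1
          * ((ρ2 b : SU2) : Matrix (Fin 2) (Fin 2) ℂ) 1 0) * starRingEnd ℂ (z : ℂ) := by
  have hval : ((glueRep ρ1 ρ2 hm1 hm2 z
        (Amalg.inl (zpowersHom (TK (-2) 7) muN27) (zpowersHom (TK (-2) 7) muN27) a
          * Amalg.inr (zpowersHom (TK (-2) 7) muN27) (zpowersHom (TK (-2) 7) muN27) b)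
      : SU2) : Matrix (Fin 2) (Fin 2) ℂ)
      = ((ρ1 a : SU2) : Matrix (Fin 2) (Fin 2) ℂ)
        * (Mz z * ((ρ2 b : SU2) : Matrix (Fin 2) (Fin 2) ℂ) * star (Mz z)) := by
    rw [_root_.map_mul (glueRep ρ1 ρ2 hm1 hm2 z), glueRep_inl, glueRep_inr]
    rfl
  rw [hval, star_Mz]
  unfold Mz
  rw [Matrix.trace_fin_two]
  simp [Matrix.mul_apply, Fin.sum_univ_two, Matrix.diagonal_apply]
  linear_combination (((ρ1 a : SU2) : Matrix (Fin 2) (Fin 2) ℂ) 0 0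
    * ((ρ2 b : SU2) : Matrix (Fin 2) (Fin 2) ℂ) 0 0) * z_mul_conj z

end CS

open CS in
/-- Given irreducible representations `ρ₁, ρ₂` of `G_{-2,7}` agreeing on the
meridian with `diag(e^{ir}, e^{-ir})`, `r ∈ (0,π)`, the set of classes in `χ(π₁(Z))` restricting
(up to conjugation) to `ρ₁` and `ρ₂` on the two copies is homeomorphic to a circle. -/
theorem gluing_parameter_circle (r : ℝ) (hr : r ∈ Set.Ioo 0 Real.pi)
    (ρ1 ρ2 : TK (-2) 7 →* SU2) (h1 : IsIrrep ρ1) (h2 : IsIrrep ρ2)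
    (hm1 : ((ρ1 muN27 : SU2) : Matrix (Fin 2) (Fin 2) ℂ) = diagU r)
    (hm2 : ((ρ2 muN27 : SU2) : Matrix (Fin 2) (Fin 2) ℂ) = diagU r) :
    Nonempty
      (↥{c : CharVar Pi1Z | ∃ ρ : Pi1Z →* SU2, c = charCl ρ ∧
          (∃ u : SU2, ∀ g : TK (-2) 7,
            ρ (Amalg.inl (zpowersHom (TK (-2) 7) muN27) (zpowersHom (TK (-2) 7) muN27) g)
              = u * ρ1 g * u⁻¹) ∧
          (∃ u : SU2, ∀ g : TK (-2) 7,
            ρ (Amalg.inr (zpowersHom (TK (-2) 7) muN27) (zpowersHom (TK (-2) 7) muN27) g)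
              = u * ρ2 g * u⁻¹)} ≃ₜ Circle) := by
  classical
  obtain ⟨a, ha⟩ := exists_offdiag h1
  obtain ⟨b, hb⟩ := exists_offdiag h2
  set A : Matrix (Fin 2) (Fin 2) ℂ := ((ρ1 a : SU2) : Matrix (Fin 2) (Fin 2) ℂ) with hA
  set B : Matrix (Fin 2) (Fin 2) ℂ := ((ρ2 b : SU2) : Matrix (Fin 2) (Fin 2) ℂ) with hB
  have hA01 : A 0 1 = - starRingEnd ℂ (A 1 0) := su2_apply_zero_one (ρ1 a)
  have hB01 : B 0 1 = - starRingEnd ℂ (B 1 0) := su2_apply_zero_one (ρ2 b)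
  have hB10 : B 1 0 = - starRingEnd ℂ (B 0 1) := by
    rw [hB01]; simp
  have hA10 : A 1 0 ≠ 0 := by
    intro h0
    apply ha
    show A 0 1 = 0
    rw [hA01, h0]
    simp
  have hb' : B 0 1 ≠ 0 := hb
  have hc0 : A 1 0 * B 0 1 ≠ 0 := mul_ne_zero hA10 hb'
  set c : ℂ := A 1 0 * B 0 1 with hc
  have hsin : Real.sin r ≠ 0 := ne_of_gt (Real.sin_pos_of_pos_of_lt_pi hr.1 hr.2)
  have hsin' : ((Real.sin r : ℝ) : ℂ) ≠ 0 := by exact_mod_cast hsin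
  set k1 : ℂ := A 0 0 * B 0 0 + A 1 1 * B 1 1 with hk1
  set k2 : ℂ := Complex.exp ((r : ℂ) * Complex.I) * (A 0 0 * B 0 0)
    + Complex.exp (-(r : ℂ) * Complex.I) * (A 1 1 * B 1 1) with hk2
  set w1 : Pi1Z := Amalg.inl (zpowersHom (TK (-2) 7) muN27) (zpowersHom (TK (-2) 7) muN27) a
    * Amalg.inr (zpowersHom (TK (-2) 7) muN27) (zpowersHom (TK (-2) 7) muN27) b with hw1
  set w2 : Pi1Z := Amalg.inl (zpowersHom (TK (-2) 7) muN27) (zpowersHom (TK (-2) 7) muN27) a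
    * Amalg.inr (zpowersHom (TK (-2) 7) muN27) (zpowersHom (TK (-2) 7) muN27) (muN27 * b)
    with hw2
  set Wf : CharVar Pi1Z → ℂ := fun q =>
    ((trFn w1 q - k1) / 2
      + Complex.I * ((Real.cos r : ℂ) * (trFn w1 q - k1) - (trFn w2 q - k2))
        / (2 * (Real.sin r : ℂ))) / c with hWf
  -- trace values on the glued family
  have he1 : Complex.exp ((r : ℂ) * Complex.I)
      = (Real.cos r : ℂ) + (Real.sin r : ℂ) * Complex.I := by
    rw [Complex.exp_mul_I, ← Complex.ofReal_cos, ← Complex.ofReal_sin]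
  have he2 : Complex.exp (-(r : ℂ) * Complex.I)
      = (Real.cos r : ℂ) - (Real.sin r : ℂ) * Complex.I := by
    rw [Complex.exp_mul_I, Complex.cos_neg, Complex.sin_neg, ← Complex.ofReal_cos,
      ← Complex.ofReal_sin]
    ring
  have htr1 : ∀ z : Circle, trFn w1 (charCl (glueRep ρ1 ρ2 hm1 hm2 z))
      = k1 + (c * (z : ℂ) + starRingEnd ℂ c * starRingEnd ℂ (z : ℂ)) := by
    intro z
    rw [hw1, trFn_charCl, trace_glueRep_pair, hk1, hc]
    rw [← hA, ← hB, hA01, hB10]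
    rw [map_mul (starRingEnd ℂ) (A 1 0) (B 0 1)]
    ring
  have hB'val : ((ρ2 (muN27 * b) : SU2) : Matrix (Fin 2) (Fin 2) ℂ) = diagU r * B := by
    have : ((ρ2 (muN27 * b) : SU2) : Matrix (Fin 2) (Fin 2) ℂ)
        = ((ρ2 muN27 : SU2) : Matrix (Fin 2) (Fin 2) ℂ)
          * ((ρ2 b : SU2) : Matrix (Fin 2) (Fin 2) ℂ) := by
      rw [_root_.map_mul ρ2]
      rfl
    rw [this, hm2, hB]
  have hB'e : ∀ i j, ((ρ2 (muN27 * b) : SU2) : Matrix (Fin 2) (Fin 2) ℂ) i j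
      = (![Complex.exp ((r : ℂ) * Complex.I), Complex.exp (-(r : ℂ) * Complex.I)] i) * B i j := by
    intro i j
    rw [hB'val]
    unfold diagU
    rw [Matrix.diagonal_mul]
  have htr2 : ∀ z : Circle, trFn w2 (charCl (glueRep ρ1 ρ2 hm1 hm2 z))
      = k2 + (((Real.cos r : ℂ) + (Real.sin r : ℂ) * Complex.I) * (c * (z : ℂ))
        + ((Real.cos r : ℂ) - (Real.sin r : ℂ) * Complex.I)
          * (starRingEnd ℂ c * starRingEnd ℂ (z : ℂ))) := by
    intro z
    rw [hw2, trFn_charCl, trace_glueRep_pair, hk2, hc]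
    rw [hB'e 0 0, hB'e 1 1, hB'e 0 1, hB'e 1 0]
    simp only [Matrix.cons_val_zero, Matrix.cons_val_one, Matrix.head_cons]
    rw [← hA, hA01, hB10]
    rw [map_mul (starRingEnd ℂ) (A 1 0) (B 0 1), he1, he2]
    ring
  have key : ∀ u v : ℂ, (u + v) / 2
      + Complex.I * ((Real.cos r : ℂ) * (u + v)
        - (((Real.cos r : ℂ) + (Real.sin r : ℂ) * Complex.I) * u
          + ((Real.cos r : ℂ) - (Real.sin r : ℂ) * Complex.I) * v)) / (2 * (Real.sin r : ℂ))
      = u := by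
    intro u v
    have hnum : Complex.I * ((Real.cos r : ℂ) * (u + v)
        - (((Real.cos r : ℂ) + (Real.sin r : ℂ) * Complex.I) * u
          + ((Real.cos r : ℂ) - (Real.sin r : ℂ) * Complex.I) * v))
        = (Real.sin r : ℂ) * (u - v) := by
      have hI := Complex.I_sq
      linear_combination ((Real.sin r : ℂ) * (v - u)) * hI
    rw [hnum]
    have hdiv : (Real.sin r : ℂ) * (u - v) / (2 * (Real.sin r : ℂ)) = (u - v) / 2 := by
      rw [mul_comm (2 : ℂ) ((Real.sin r : ℝ) : ℂ)]
      exact mul_div_mul_left (u - v) 2 hsin'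
    rw [hdiv]
    ring
  have hWz : ∀ z : Circle, Wf (charCl (glueRep ρ1 ρ2 hm1 hm2 z)) = (z : ℂ) := by
    intro z
    rw [hWf]
    simp only
    rw [htr1 z, htr2 z]
    have e3 : k1 + (c * (z : ℂ) + starRingEnd ℂ c * starRingEnd ℂ (z : ℂ)) - k1
        = c * (z : ℂ) + starRingEnd ℂ c * starRingEnd ℂ (z : ℂ) := by ring
    have e4 : k2 + (((Real.cos r : ℂ) + (Real.sin r : ℂ) * Complex.I) * (c * (z : ℂ))
        + ((Real.cos r : ℂ) - (Real.sin r : ℂ) * Complex.I)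
          * (starRingEnd ℂ c * starRingEnd ℂ (z : ℂ))) - k2
        = ((Real.cos r : ℂ) + (Real.sin r : ℂ) * Complex.I) * (c * (z : ℂ))
          + ((Real.cos r : ℂ) - (Real.sin r : ℂ) * Complex.I)
            * (starRingEnd ℂ c * starRingEnd ℂ (z : ℂ)) := by ring
    rw [e3, e4, key (c * (z : ℂ)) (starRingEnd ℂ c * starRingEnd ℂ (z : ℂ))]
    exact mul_div_cancel_left₀ ((z : ℂ)) hc0
  -- membership of the glued classes
  have hmem : ∀ z : Circle, charCl (glueRep ρ1 ρ2 hm1 hm2 z) ∈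
      {c : CharVar Pi1Z | ∃ ρ : Pi1Z →* SU2, c = charCl ρ ∧
        (∃ u : SU2, ∀ g : TK (-2) 7,
          ρ (Amalg.inl (zpowersHom (TK (-2) 7) muN27) (zpowersHom (TK (-2) 7) muN27) g)
            = u * ρ1 g * u⁻¹) ∧
        (∃ u : SU2, ∀ g : TK (-2) 7,
          ρ (Amalg.inr (zpowersHom (TK (-2) 7) muN27) (zpowersHom (TK (-2) 7) muN27) g)
            = u * ρ2 g * u⁻¹)} := by
    intro z
    refine ⟨glueRep ρ1 ρ2 hm1 hm2 z, rfl, ⟨1, fun g => ?_⟩,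
      ⟨diagSU (((z : ℂ)).arg / 2), fun g => ?_⟩⟩
    · rw [glueRep_inl]
      simp
    · rw [glueRep_inr]
      apply Subtype.ext
      exact cact_eq_su2_conj z (ρ2 g)
  set SS : Set (CharVar Pi1Z) :=
      {c : CharVar Pi1Z | ∃ ρ : Pi1Z →* SU2, c = charCl ρ ∧
        (∃ u : SU2, ∀ g : TK (-2) 7,
          ρ (Amalg.inl (zpowersHom (TK (-2) 7) muN27) (zpowersHom (TK (-2) 7) muN27) g)
            = u * ρ1 g * u⁻¹) ∧
        (∃ u : SU2, ∀ g : TK (-2) 7,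
          ρ (Amalg.inr (zpowersHom (TK (-2) 7) muN27) (zpowersHom (TK (-2) 7) muN27) g)
            = u * ρ2 g * u⁻¹)} with hSS
  have hexist : ∀ s : ↥SS, ∃ z : Circle, (s : CharVar Pi1Z)
      = charCl (glueRep ρ1 ρ2 hm1 hm2 z) := by
    rintro ⟨s, ρ, hceq, hu, hv⟩
    obtain ⟨z, hz⟩ := exists_glueRep_class ρ1 ρ2 hr hm1 hm2 ρ hu hv
    exact ⟨z, hceq.trans hz⟩
  have hWmem : ∀ s : ↥SS, Wf (s : CharVar Pi1Z) ∈ Submonoid.unitSphere ℂ := by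
    intro s
    obtain ⟨z, hz⟩ := hexist s
    rw [hz, hWz z]
    exact z.2
  have hcontW : Continuous Wf := by
    rw [hWf]
    apply Continuous.div_const
    apply Continuous.add
    · exact ((continuous_trFn w1).sub continuous_const).div_const 2
    · apply Continuous.div_const
      exact continuous_const.mul
        ((continuous_const.mul ((continuous_trFn w1).sub continuous_const)).sub
          ((continuous_trFn w2).sub continuous_const))
  refine ⟨Homeomorph.symm ⟨⟨fun z => ⟨charCl (glueRep ρ1 ρ2 hm1 hm2 z), hmem z⟩,
    fun s => ⟨Wf (s : CharVar Pi1Z), hWmem s⟩, ?_, ?_⟩, ?_, ?_⟩⟩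
  · -- left inverse
    intro z
    apply Subtype.ext
    exact hWz z
  · -- right inverse
    intro s
    apply Subtype.ext
    obtain ⟨z, hz⟩ := hexist s
    have hzeq : (⟨Wf (s : CharVar Pi1Z), hWmem s⟩ : Circle) = z := by
      apply Subtype.ext
      show Wf (s : CharVar Pi1Z) = (z : ℂ)
      rw [hz, hWz z]
    show charCl (glueRep ρ1 ρ2 hm1 hm2 (⟨Wf (s : CharVar Pi1Z), hWmem s⟩ : Circle))
      = (s : CharVar Pi1Z)
    exact (congrArg (fun t => charCl (glueRep ρ1 ρ2 hm1 hm2 t)) hzeq).trans hz.symm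
  · -- continuity of toFun (Circle → SS)
    apply Continuous.subtype_mk
    have hq : Continuous (fun ρ : Pi1Z →* SU2 => charCl ρ) := continuous_quot_mk
    exact hq.comp (continuous_glueRep ρ1 ρ2 hm1 hm2)
  · -- continuity of invFun (SS → Circle)
    apply Continuous.subtype_mk
    exact hcontW.comp continuous_subtype_val
end
end
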